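/- arXiv:0909.3416 — 7 statements merged into one kernel-verified Lean document; each statement's English description precedes it below -/
import Mathlib

section
/- Let (x_n)_{n∈ℕ} be a sequence of complex numbers such that for every p ∈ ℕ the series ∑_{n=p}^∞ x_n/(n−p)! converges; denote its sum by y_p. Fix n ∈ ℕ and, for each integer k ≥ n, set R^n_k := ∑_{n'=k+1}^∞ ∑_{p=n}^k (−1)^{p+n} x_{n'}/((p−n)!·(n'−p)!) (this series converges). Then the series ∑_{p=n}^∞ (−1)^{p−n} y_p/(p−n)! converges with sum x_n if and only if lim_{k→∞} R^n_k = 0. -/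
open Filter

/-- Convergence of the series `∑_{j=0}^∞ f j` (in the sense of partial sums) to `a`. -/
def SeriesConvTo (f : ℕ → ℂ) (a : ℂ) : Prop :=
  Tendsto (fun N => ∑ j ∈ Finset.range N, f j) atTop (nhds a)

lemma binom_alt (m : ℕ) :
    ∑ j ∈ Finset.range (m+1), (-1:ℂ)^j / ((j.factorial : ℂ) * ((m-j).factorial : ℂ))
      = if m = 0 then 1 else 0 := by
  have key : ∀ j ∈ Finset.range (m+1),
      (-1:ℂ)^j / ((j.factorial : ℂ) * ((m-j).factorial : ℂ))
        = (-1:ℂ)^j * (m.choose j) / (m.factorial : ℂ) := by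
    intro j hj
    rw [Finset.mem_range, Nat.lt_succ_iff] at hj
    have h := Nat.choose_mul_factorial_mul_factorial hj
    have h2 : ((m.choose j : ℂ)) * ((j.factorial : ℂ) * ((m-j).factorial : ℂ))
        = (m.factorial : ℂ) := by
      push_cast [← h]; ring
    have hj1 : (j.factorial : ℂ) ≠ 0 := Nat.cast_ne_zero.mpr j.factorial_ne_zero
    have hj2 : ((m-j).factorial : ℂ) ≠ 0 := Nat.cast_ne_zero.mpr (m-j).factorial_ne_zero
    have hm : (m.factorial : ℂ) ≠ 0 := Nat.cast_ne_zero.mpr m.factorial_ne_zero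
    field_simp
    linear_combination (-1:ℂ) * h2
  rw [Finset.sum_congr rfl key, ← Finset.sum_div]
  have h3 : ∑ j ∈ Finset.range (m+1), (-1:ℂ)^j * (m.choose j)
      = if m = 0 then 1 else 0 := by
    have := Int.alternating_sum_range_choose (n := m)
    have := congrArg (fun z : ℤ => (z : ℂ)) this
    push_cast at this
    simpa using this
  rw [h3]
  split
  · next h => subst h; norm_num [Nat.factorial]
  · next h => simp [h]

lemma psi_step (x : ℕ → ℂ) (n K M : ℕ) :
    ∑ j ∈ Finset.range K, (-1:ℂ)^j / (j.factorial : ℂ) *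
        ∑ i ∈ Finset.range (M + 1 - j), x (n+j+i) / (i.factorial : ℂ)
      = (∑ j ∈ Finset.range K, (-1:ℂ)^j / (j.factorial : ℂ) *
          ∑ i ∈ Finset.range (M - j), x (n+j+i) / (i.factorial : ℂ))
        + ∑ j ∈ Finset.range K,
            (if j ≤ M then (-1:ℂ)^j / (j.factorial : ℂ) * (x (n+M) / ((M-j).factorial : ℂ)) else 0) := by
  rw [← Finset.sum_add_distrib]
  refine Finset.sum_congr rfl fun j hj => ?_
  by_cases h : j ≤ M
  · have h1 : M + 1 - j = (M - j) + 1 := by omega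
    rw [if_pos h, h1, Finset.sum_range_succ]
    have h2 : n + j + (M - j) = n + M := by omega
    rw [h2]; ring
  · have h1 : M + 1 - j = M - j := by omega
    rw [if_neg h, h1, add_zero]

lemma ite_sum_eq (K M : ℕ) (hMK : M < K) (f : ℕ → ℂ) :
    ∑ j ∈ Finset.range K, (if j ≤ M then f j else 0) = ∑ j ∈ Finset.range (M+1), f j := by
  rw [← Finset.sum_subset (Finset.range_subset_range.mpr hMK)
    (fun j _ hj => by rw [if_neg (by simp at hj ⊢; omega)])]
  exact Finset.sum_congr rfl fun j hj => if_pos (by simp at hj; omega)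

lemma psi_low (x : ℕ → ℂ) (n K : ℕ) : ∀ M ≤ K,
    (∑ j ∈ Finset.range K, (-1:ℂ)^j / (j.factorial : ℂ) *
        ∑ i ∈ Finset.range (M - j), x (n+j+i) / (i.factorial : ℂ))
      = if M = 0 then 0 else x n := by
  intro M
  induction M with
  | zero => intro _; simp
  | succ M ih =>
    intro hM
    rw [psi_step, ih (by omega), ite_sum_eq K M (by omega)]
    have h2 : ∑ j ∈ Finset.range (M+1),
        (-1:ℂ)^j / (j.factorial : ℂ) * (x (n+M) / ((M-j).factorial : ℂ))
        = x (n+M) * ∑ j ∈ Finset.range (M+1), (-1:ℂ)^j / ((j.factorial : ℂ) * ((M-j).factorial : ℂ)) := by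
      rw [Finset.mul_sum]
      exact Finset.sum_congr rfl fun j _ => by ring
    rw [h2, binom_alt]
    by_cases hM0 : M = 0
    · subst hM0; simp
    · simp [hM0, Nat.succ_ne_zero]

lemma full_sum_eq (x : ℕ → ℂ) (n k M : ℕ) (hk : n ≤ k) (hM : k - n + 1 ≤ M) :
    ∑ j ∈ Finset.range (k - n + 1),
        (-1:ℂ)^j / (j.factorial : ℂ) * (x (n+M) / ((M-j).factorial : ℂ))
      = ∑ p ∈ Finset.Icc n k,
          (-1:ℂ)^(p+n) * x (k+1+(M - (k-n+1))) /
            (((p-n).factorial : ℂ) * (((k+1+(M - (k-n+1)))-p).factorial : ℂ)) := by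
  refine Finset.sum_nbij' (fun j => n + j) (fun p => p - n) ?_ ?_ ?_ ?_ ?_
  · intro j hj; rw [Finset.mem_range] at hj; rw [Finset.mem_Icc]; omega
  · intro p hp; rw [Finset.mem_Icc] at hp; rw [Finset.mem_range]; omega
  · intro j hj; omega
  · intro p hp; rw [Finset.mem_Icc] at hp; omega
  intro j hj
  rw [Finset.mem_range] at hj
  have e1 : k + 1 + (M - (k-n+1)) = n + M := by omega
  rw [e1]
  have e2 : n + j - n = j := by omega
  rw [e2]
  have e3 : n + M - (n + j) = M - j := by omega
  rw [e3]
  have e4 : (-1:ℂ)^(n+j+n) = (-1:ℂ)^j := by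
    rw [show n+j+n = 2*n+j by ring, pow_add, pow_mul]
    norm_num
  rw [e4]
  ring

lemma key_identity (x : ℕ → ℂ) (n k : ℕ) (hk : n ≤ k) : ∀ M : ℕ,
    ∑ j ∈ Finset.range (k - n + 1), (-1:ℂ)^j / (j.factorial : ℂ) *
        ∑ i ∈ Finset.range (k - n + 1 + M - j), x (n+j+i) / (i.factorial : ℂ)
      = x n + ∑ j' ∈ Finset.range M, ∑ p ∈ Finset.Icc n k,
          (-1:ℂ)^(p+n) * x (k+1+j') /
            (((p-n).factorial : ℂ) * (((k+1+j')-p).factorial : ℂ)) := by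
  intro M
  induction M with
  | zero =>
    rw [show k - n + 1 + 0 = k - n + 1 from rfl, psi_low x n (k-n+1) (k-n+1) le_rfl]
    simp
  | succ M ih =>
    have e : k - n + 1 + (M + 1) = (k - n + 1 + M) + 1 := by omega
    rw [e, psi_step, ih]
    have hfull : ∀ j ∈ Finset.range (k - n + 1),
        (if j ≤ k - n + 1 + M then (-1:ℂ)^j / (j.factorial : ℂ) *
            (x (n+(k - n + 1 + M)) / (((k - n + 1 + M)-j).factorial : ℂ)) else 0)
          = (-1:ℂ)^j / (j.factorial : ℂ) *
            (x (n+(k - n + 1 + M)) / (((k - n + 1 + M)-j).factorial : ℂ)) := by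
      intro j hj
      rw [Finset.mem_range] at hj
      rw [if_pos (by omega)]
    rw [Finset.sum_congr rfl hfull, full_sum_eq x n k (k - n + 1 + M) hk (by omega)]
    have e2 : k - n + 1 + M - (k - n + 1) = M := by omega
    rw [e2, Finset.sum_range_succ, add_assoc]

/-- Lemma 2 (a): with `y_p = ∑_{n=p}^∞ x_n/(n−p)!` and
`R^n_k = ∑_{n'=k+1}^∞ ∑_{p=n}^k (−1)^{p+n} x_{n'}/((p−n)!(n'−p)!)`,
the series `∑_{p=n}^∞ (−1)^{p−n} y_p/(p−n)!` converges to `x_n` iff `R^n_k → 0`. -/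
theorem stmt_0 (x y : ℕ → ℂ)
    (hy : ∀ p : ℕ, SeriesConvTo (fun j => x (p + j) / (j.factorial : ℂ)) (y p))
    (n : ℕ) (R : ℕ → ℂ)
    (hR : ∀ k, n ≤ k →
      SeriesConvTo
        (fun j => ∑ p ∈ Finset.Icc n k,
          (-1 : ℂ) ^ (p + n) * x (k + 1 + j) /
            (((p - n).factorial : ℂ) * (((k + 1 + j) - p).factorial : ℂ)))
        (R k)) :
    SeriesConvTo (fun j => (-1 : ℂ) ^ j * y (n + j) / (j.factorial : ℂ)) (x n) ↔
      Tendsto R atTop (nhds 0) := by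
  set P : ℕ → ℂ := fun N => ∑ j ∈ Finset.range N, (-1:ℂ)^j * y (n+j) / (j.factorial : ℂ)
    with hP
  have key : ∀ k, n ≤ k → P (k - n + 1) = x n + R k := by
    intro k hk
    set K := k - n + 1 with hK
    have hΨlim1 : Tendsto (fun M => ∑ j ∈ Finset.range K, (-1:ℂ)^j / (j.factorial : ℂ) *
        ∑ i ∈ Finset.range (K + M - j), x (n+j+i) / (i.factorial : ℂ)) atTop (nhds (P K)) := by
      have : P K = ∑ j ∈ Finset.range K, (-1:ℂ)^j / (j.factorial : ℂ) * y (n+j) := by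
        rw [hP]
        exact Finset.sum_congr rfl fun j _ => by ring
      rw [this]
      apply tendsto_finset_sum
      intro j hj
      apply Tendsto.const_mul
      have hadd : Tendsto (fun M : ℕ => K + M) atTop atTop :=
        (tendsto_add_atTop_nat K).congr fun a => add_comm a K
      have h1 : Tendsto (fun M => K + M - j) atTop atTop :=
        (tendsto_sub_atTop_nat j).comp hadd
      have h2 := (hy (n + j)).comp h1
      simpa [Function.comp_def, add_assoc] using h2
    have hΨlim2 : Tendsto (fun M => ∑ j ∈ Finset.range K, (-1:ℂ)^j / (j.factorial : ℂ) *
        ∑ i ∈ Finset.range (K + M - j), x (n+j+i) / (i.factorial : ℂ)) atTop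
        (nhds (x n + R k)) := by
      have he : (fun M => ∑ j ∈ Finset.range K, (-1:ℂ)^j / (j.factorial : ℂ) *
          ∑ i ∈ Finset.range (K + M - j), x (n+j+i) / (i.factorial : ℂ))
          = fun M => x n + ∑ j' ∈ Finset.range M, ∑ p ∈ Finset.Icc n k,
              (-1:ℂ)^(p+n) * x (k+1+j') /
                (((p-n).factorial : ℂ) * (((k+1+j')-p).factorial : ℂ)) := by
        funext M
        exact key_identity x n k hk M
      rw [he]
      exact Tendsto.const_add (x n) (hR k hk)
    exact tendsto_nhds_unique hΨlim1 hΨlim2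
  constructor
  · intro h
    have h1 : Tendsto (fun k => P (k - n + 1)) atTop (nhds (x n)) :=
      h.comp ((tendsto_add_atTop_nat 1).comp (tendsto_sub_atTop_nat n))
    have h2 : Tendsto (fun k => P (k - n + 1) - x n) atTop (nhds 0) := by
      simpa using h1.sub_const (x n)
    apply h2.congr'
    filter_upwards [eventually_ge_atTop n] with k hk
    rw [key k hk]; ring
  · intro h
    rw [SeriesConvTo]
    rw [← tendsto_add_atTop_iff_nat 1]
    have h1 : Tendsto (fun N : ℕ => x n + R (n + N)) atTop (nhds (x n + 0)) :=
      Tendsto.const_add (x n) (h.comp ((tendsto_add_atTop_nat n).congr fun a => add_comm a n))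
    rw [add_zero] at h1
    apply h1.congr
    intro N
    have hk : n ≤ n + N := Nat.le_add_right n N
    have := key (n + N) hk
    rw [show n + N - n + 1 = N + 1 by omega] at this
    rw [← this]
end

section
/- Let (x_n)_{n∈ℕ} be a sequence of complex numbers such that for every p ∈ ℕ the series ∑_{n=p}^∞ x_n/(n−p)! converges, and suppose lim_{n→∞} |x_n| = 0. For n ∈ ℕ and integers k ≥ n set R^n_k := ∑_{n'=k+1}^∞ ∑_{p=n}^k (−1)^{p+n} x_{n'}/((p−n)!·(n'−p)!). Then for every n ∈ ℕ, lim_{k→∞} R^n_k = 0. -/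
open Filter

/-- Lemma 2 (b): if the series `∑_{n=p}^∞ x_n/(n−p)!` converges for every `p` and
`|x_n| → 0`, then `R^n_k → 0` as `k → ∞`, for every `n`. -/
theorem stmt_1 (x y : ℕ → ℂ)
    (hy : ∀ p : ℕ, SeriesConvTo (fun j => x (p + j) / (j.factorial : ℂ)) (y p))
    (hx : Tendsto (fun n => ‖x n‖) atTop (nhds 0))
    (R : ℕ → ℕ → ℂ)
    (hR : ∀ n k, n ≤ k →
      SeriesConvTo
        (fun j => ∑ p ∈ Finset.Icc n k,
          (-1 : ℂ) ^ (p + n) * x (k + 1 + j) /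
            (((p - n).factorial : ℂ) * (((k + 1 + j) - p).factorial : ℂ)))
        (R n k)) :
    ∀ n : ℕ, Tendsto (fun k => R n k) atTop (nhds 0) := by
  intro n
  -- x is bounded
  obtain ⟨C, hC⟩ : ∃ C, ∀ m, ‖x m‖ ≤ C := by
    obtain ⟨C, hC⟩ := hx.bddAbove_range
    exact ⟨C, fun m => hC ⟨m, rfl⟩⟩
  have hC0 : 0 ≤ C := le_trans (norm_nonneg _) (hC 0)
  set g : ℕ → ℝ := fun t => 2 ^ t / t.factorial with hgdef
  have hg : Summable g := Real.summable_pow_div_factorial 2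
  have hgnn : ∀ t, 0 ≤ g t := fun t => by
    simp only [hgdef]; positivity
  -- key bound
  have key : ∀ k, n ≤ k →
      ‖R n k‖ ≤ C * ∑' j, g (j + (k + 1 - n)) := by
    intro k hk
    have hgsum : Summable (fun j => g (j + (k + 1 - n))) :=
      (summable_nat_add_iff (k + 1 - n)).2 hg
    have hRk := hR n k hk
    -- bound the partial sums
    have hb : ∀ N, ‖∑ j ∈ Finset.range N, ∑ p ∈ Finset.Icc n k,
        (-1 : ℂ) ^ (p + n) * x (k + 1 + j) /
          (((p - n).factorial : ℂ) * (((k + 1 + j) - p).factorial : ℂ))‖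
        ≤ C * ∑' j, g (j + (k + 1 - n)) := by
      intro N
      have step : ∀ j : ℕ, ‖∑ p ∈ Finset.Icc n k,
          (-1 : ℂ) ^ (p + n) * x (k + 1 + j) /
            (((p - n).factorial : ℂ) * (((k + 1 + j) - p).factorial : ℂ))‖
          ≤ C * g (j + (k + 1 - n)) := by
        intro j
        set m := k + 1 + j with hm
        have habs : ∀ p ∈ Finset.Icc n k,
            ‖(-1 : ℂ) ^ (p + n) * x m /
              (((p - n).factorial : ℂ) * ((m - p).factorial : ℂ))‖
            ≤ C * (((m - n).choose (p - n) : ℝ) / ((m - n).factorial : ℝ)) := by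
          intro p hp
          rw [Finset.mem_Icc] at hp
          have hpm : p ≤ m := by omega
          have hfac : ((m - n).choose (p - n)) * (p - n).factorial * (m - p).factorial
              = (m - n).factorial := by
            have h1 : p - n ≤ m - n := by omega
            have := Nat.choose_mul_factorial_mul_factorial h1
            have h2 : m - n - (p - n) = m - p := by omega
            rwa [h2] at this
          have hcast : ((m - n).factorial : ℝ)
              = ((m - n).choose (p - n) : ℝ) * ((p - n).factorial : ℝ) *
                ((m - p).factorial : ℝ) := by exact_mod_cast hfac.symm
          rw [norm_div, norm_mul, norm_mul, norm_pow]
          simp only [norm_neg, norm_one, one_pow, one_mul]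
          rw [Complex.norm_natCast, Complex.norm_natCast]
          rw [div_le_iff₀ (by positivity)]
          have ha : ((p - n).factorial : ℝ) ≠ 0 := by positivity
          have hb' : ((m - p).factorial : ℝ) ≠ 0 := by positivity
          have hcne : (((m - n).choose (p - n)) : ℝ) ≠ 0 := by
            have : 0 < (m - n).choose (p - n) := Nat.choose_pos (by omega)
            exact_mod_cast this.ne'
          have hrw : C * (((m - n).choose (p - n) : ℝ) / ((m - n).factorial : ℝ)) *
              (((p - n).factorial : ℝ) * ((m - p).factorial : ℝ)) = C := by
            rw [hcast]; field_simp
          rw [hrw]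
          exact hC m
        have hnat : ∑ p ∈ Finset.Icc n k, (m - n).choose (p - n) ≤ 2 ^ (m - n) := by
          have h1 : ∑ p ∈ Finset.Icc n k, (m - n).choose (p - n)
              = ∑ i ∈ Finset.range (k + 1 - n), (m - n).choose i := by
            rw [← Finset.Ico_add_one_right_eq_Icc, Finset.sum_Ico_eq_sum_range]
            exact Finset.sum_congr rfl fun i _ => by congr 1; omega
          rw [h1]
          calc ∑ i ∈ Finset.range (k + 1 - n), (m - n).choose i
              ≤ ∑ i ∈ Finset.range (m - n + 1), (m - n).choose i :=
                Finset.sum_le_sum_of_subset (Finset.range_subset_range.2 (by omega))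
            _ = 2 ^ (m - n) := Nat.sum_range_choose _
        calc ‖∑ p ∈ Finset.Icc n k,
            (-1 : ℂ) ^ (p + n) * x m /
              (((p - n).factorial : ℂ) * ((m - p).factorial : ℂ))‖
            ≤ ∑ p ∈ Finset.Icc n k, ‖(-1 : ℂ) ^ (p + n) * x m /
              (((p - n).factorial : ℂ) * ((m - p).factorial : ℂ))‖ :=
              norm_sum_le _ _
          _ ≤ ∑ p ∈ Finset.Icc n k,
              C * (((m - n).choose (p - n) : ℝ) / ((m - n).factorial : ℝ)) :=
              Finset.sum_le_sum habs
          _ ≤ C * g (j + (k + 1 - n)) := by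
              rw [← Finset.mul_sum]
              apply mul_le_mul_of_nonneg_left _ hC0
              have hmn : j + (k + 1 - n) = m - n := by omega
              rw [hmn, ← Finset.sum_div, hgdef]
              simp only
              gcongr
              calc (∑ p ∈ Finset.Icc n k, (((m - n).choose (p - n) : ℝ)))
                  = ((∑ p ∈ Finset.Icc n k, (m - n).choose (p - n) : ℕ) : ℝ) := by
                      push_cast; rfl
                _ ≤ ((2 ^ (m - n) : ℕ) : ℝ) := by exact_mod_cast hnat
                _ = 2 ^ (m - n) := by push_cast; rfl
      calc ‖∑ j ∈ Finset.range N, ∑ p ∈ Finset.Icc n k,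
            (-1 : ℂ) ^ (p + n) * x (k + 1 + j) /
              (((p - n).factorial : ℂ) * (((k + 1 + j) - p).factorial : ℂ))‖
          ≤ ∑ j ∈ Finset.range N, ‖∑ p ∈ Finset.Icc n k,
            (-1 : ℂ) ^ (p + n) * x (k + 1 + j) /
              (((p - n).factorial : ℂ) * (((k + 1 + j) - p).factorial : ℂ))‖ :=
            norm_sum_le _ _
        _ ≤ ∑ j ∈ Finset.range N, C * g (j + (k + 1 - n)) :=
            Finset.sum_le_sum fun j _ => step j
        _ = C * ∑ j ∈ Finset.range N, g (j + (k + 1 - n)) := by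
            rw [Finset.mul_sum]
        _ ≤ C * ∑' j, g (j + (k + 1 - n)) :=
            mul_le_mul_of_nonneg_left
              (Summable.sum_le_tsum (Finset.range N) (fun i _ => hgnn _) hgsum) hC0
    exact le_of_tendsto (continuous_norm.continuousAt.tendsto.comp hRk)
      (Eventually.of_forall hb)
  -- the bound tends to zero
  have htail : Tendsto (fun k => C * ∑' j, g (j + (k + 1 - n))) atTop (nhds 0) := by
    have h1 : Tendsto (fun k : ℕ => k + 1 - n) atTop atTop :=
      tendsto_atTop_atTop.mpr fun b => ⟨b + n, fun a ha => by omega⟩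
    have h2 := (tendsto_sum_nat_add g).comp h1
    simpa using h2.const_mul C
  rw [tendsto_zero_iff_norm_tendsto_zero]
  apply squeeze_zero_norm' _ htail
  filter_upwards [eventually_ge_atTop n] with k hk
  simpa using key k hk
end

section
/- For every λ ∈ ℂ with |λ| < 1 and every t ∈ ℝ, the series ∑_{k=0}^∞ ((λ−1)^k·k!/(2^k·(2k)!))·H_{2k}(t) converges absolutely, i.e. ∑_{k=0}^∞ (|λ−1|^k·k!/(2^k·(2k)!))·|H_{2k}(t)| < ∞. -/
/-- Physicists' Hermite polynomials: `H 0 = 1`, `H 1 x = 2x`,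
`H (n+2) x = 2x·H (n+1) x − 2(n+1)·H n x`. -/
noncomputable def physHermite : ℕ → ℝ → ℝ
  | 0, _ => 1
  | 1, x => 2 * x
  | n + 2, x => 2 * x * physHermite (n + 1) x - 2 * (n + 1) * physHermite n x

noncomputable def auxG : ℕ → ℝ → ℝ
  | 0, _ => 1
  | 1, x => 2 * x
  | n + 2, x => 2 * x * auxG (n + 1) x + 2 * (n + 1) * auxG n x

lemma auxG_succ_succ (n : ℕ) (x : ℝ) :
    auxG (n + 2) x = 2 * x * auxG (n + 1) x + 2 * (n + 1) * auxG n x := rfl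

lemma physHermite_succ_succ (n : ℕ) (x : ℝ) :
    physHermite (n + 2) x = 2 * x * physHermite (n + 1) x - 2 * (n + 1) * physHermite n x := rfl

lemma auxG_nonneg {u : ℝ} (hu : 0 ≤ u) (n : ℕ) : 0 ≤ auxG n u := by
  have key : ∀ m, 0 ≤ auxG m u ∧ 0 ≤ auxG (m + 1) u := by
    intro m
    induction m with
    | zero => constructor <;> simp [auxG] <;> positivity
    | succ m ih =>
      refine ⟨ih.2, ?_⟩
      rw [auxG_succ_succ]
      have h1 := ih.1; have h2 := ih.2
      have : (0:ℝ) ≤ (m : ℝ) + 1 := by positivity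
      nlinarith
  exact (key n).1

lemma abs_physHermite_le (t : ℝ) (n : ℕ) : |physHermite n t| ≤ auxG n |t| := by
  have key : ∀ m, |physHermite m t| ≤ auxG m |t| ∧
      |physHermite (m + 1) t| ≤ auxG (m + 1) |t| := by
    intro m
    induction m with
    | zero =>
      refine ⟨by simp [physHermite, auxG], ?_⟩
      simp only [physHermite, auxG, abs_mul]
      simp
    | succ m ih =>
      refine ⟨ih.2, ?_⟩
      rw [physHermite_succ_succ, auxG_succ_succ]
      have h1 := ih.1; have h2 := ih.2
      have hm : (0:ℝ) ≤ 2 * ((m:ℝ) + 1) := by positivity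
      have habs : |2 * t * physHermite (m + 1) t - 2 * ((m:ℝ) + 1) * physHermite m t| ≤
          |2 * t * physHermite (m + 1) t| + |2 * ((m:ℝ) + 1) * physHermite m t| := abs_sub _ _
      rw [abs_mul, abs_mul, abs_mul, abs_of_nonneg hm] at habs
      have h2' : |(2:ℝ)| * |t| * |physHermite (m + 1) t| ≤ 2 * |t| * auxG (m + 1) |t| := by
        rw [abs_two]
        have : (0:ℝ) ≤ 2 * |t| := by positivity
        exact mul_le_mul_of_nonneg_left h2 this
      have h1' : 2 * ((m:ℝ) + 1) * |physHermite m t| ≤ 2 * ((m:ℝ) + 1) * auxG m |t| :=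
        mul_le_mul_of_nonneg_left h1 hm
      push_cast
      linarith
  exact (key n).1

lemma auxG_even_pos {u : ℝ} (hu : 0 ≤ u) (k : ℕ) : 0 < auxG (2 * k) u := by
  induction k with
  | zero => simp [auxG]
  | succ k ih =>
    have : 2 * (k + 1) = (2 * k) + 2 := by ring
    rw [this, auxG_succ_succ]
    have h1 : 0 ≤ auxG (2 * k + 1) u := auxG_nonneg hu _
    have : (0:ℝ) < 2 * ((2 * k : ℕ) + 1) := by positivity
    nlinarith

lemma auxG_odd_le {u : ℝ} (hu : 0 ≤ u) (k : ℕ) :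
    auxG (2 * k + 1) u ≤ (2 * u + 2 * Real.sqrt (2 * k)) * auxG (2 * k) u := by
  induction k with
  | zero => simp [auxG]
  | succ k ih =>
    set c : ℝ := 2 * Real.sqrt (2 * k) with hc
    set s : ℝ := Real.sqrt (2 * ((k : ℝ) + 1)) with hs
    have hc0 : 0 ≤ c := by positivity
    have hs0 : 0 ≤ s := Real.sqrt_nonneg _
    have hc2 : c ^ 2 = 8 * k := by
      rw [hc, mul_pow, Real.sq_sqrt (by positivity : (0:ℝ) ≤ 2 * k)]; ring
    have hs2 : s ^ 2 = 2 * (k : ℝ) + 2 := by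
      rw [hs, Real.sq_sqrt (by positivity)]; ring
    have hG0 : 0 ≤ auxG (2 * k) u := auxG_nonneg hu _
    have hG1 : 0 ≤ auxG (2 * k + 1) u := auxG_nonneg hu _
    have hG2 : 0 ≤ auxG (2 * k + 2) u := auxG_nonneg hu _
    have e2 : auxG (2 * k + 2) u
        = 2 * u * auxG (2 * k + 1) u + 2 * ((2 * k : ℕ) + 1) * auxG (2 * k) u :=
      auxG_succ_succ _ _
    have e3 : auxG (2 * k + 3) u
        = 2 * u * auxG (2 * k + 2) u + 2 * ((2 * k + 1 : ℕ) + 1) * auxG (2 * k + 1) u :=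
      auxG_succ_succ _ _
    set D : ℝ := 4 * u ^ 2 + 2 * u * c + 4 * k + 2 with hD
    have hDpos : 0 < D := by positivity
    -- (1)  D * G(2k+1) ≤ (2u+c) * G(2k+2)
    have h1 : D * auxG (2 * k + 1) u ≤ (2 * u + c) * auxG (2 * k + 2) u := by
      rw [e2]
      have hih : auxG (2 * k + 1) u ≤ (2 * u + c) * auxG (2 * k) u := by
        rw [hc]; exact ih
      push_cast
      nlinarith [mul_le_mul_of_nonneg_left hih (by positivity : (0:ℝ) ≤ 2 * (2 * (k:ℝ) + 1)),
        mul_nonneg hu hG1, mul_nonneg hc0 hG1]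
    -- scalar inequality:  s*(2u+c) ≤ D
    have hkey : s * (2 * u + c) ≤ D := by
      nlinarith [sq_nonneg (2 * s - (2 * u + c)), mul_nonneg hu hc0]
    -- (2)  (4k+4)*(2u+c) ≤ 2 s D
    have h2 : (4 * (k : ℝ) + 4) * (2 * u + c) ≤ 2 * s * D := by
      have hmul := mul_le_mul_of_nonneg_left hkey (by positivity : (0:ℝ) ≤ 2 * s)
      have e : 2 * s * (s * (2 * u + c)) = (4 * (k:ℝ) + 4) * (2 * u + c) := by
        rw [show 2 * s * (s * (2 * u + c)) = 2 * s ^ 2 * (2 * u + c) by ring, hs2]; ring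
      linarith
    -- (3)  (4k+4) * G(2k+1) ≤ 2 s * G(2k+2)
    have h3 : (4 * (k : ℝ) + 4) * auxG (2 * k + 1) u ≤ 2 * s * auxG (2 * k + 2) u := by
      have hA : (4 * (k : ℝ) + 4) * (D * auxG (2 * k + 1) u)
          ≤ (4 * (k : ℝ) + 4) * ((2 * u + c) * auxG (2 * k + 2) u) :=
        mul_le_mul_of_nonneg_left h1 (by positivity)
      have hB : ((4 * (k : ℝ) + 4) * (2 * u + c)) * auxG (2 * k + 2) u
          ≤ (2 * s * D) * auxG (2 * k + 2) u :=
        mul_le_mul_of_nonneg_right h2 hG2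
      have hC : D * ((4 * (k : ℝ) + 4) * auxG (2 * k + 1) u)
          ≤ D * (2 * s * auxG (2 * k + 2) u) := by nlinarith
      exact le_of_mul_le_mul_left hC hDpos
    -- conclude
    rw [show 2 * (k + 1) + 1 = 2 * k + 3 by ring, show 2 * (k + 1) = 2 * k + 2 by ring,
      e3, Nat.cast_succ]
    push_cast
    linarith [h3]

lemma auxG_even_step {u : ℝ} (hu : 0 ≤ u) (k : ℕ) :
    auxG (2 * k + 2) u
      ≤ (4 * u ^ 2 + 4 * u * Real.sqrt (2 * k) + 4 * k + 2) * auxG (2 * k) u := by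
  have h := auxG_odd_le hu k
  have e2 : auxG (2 * k + 2) u
      = 2 * u * auxG (2 * k + 1) u + 2 * ((2 * k : ℕ) + 1) * auxG (2 * k) u :=
    auxG_succ_succ _ _
  rw [e2]
  have h' := mul_le_mul_of_nonneg_left h (by positivity : (0:ℝ) ≤ 2 * u)
  push_cast
  nlinarith [h']

/-- Absolute convergence of the series defining the generalized Markov kernel:
for `|λ| < 1` and `t ∈ ℝ`, `∑_{k} (|λ−1|^k k!/(2^k (2k)!)) |H_{2k}(t)| < ∞`. -/
theorem stmt_7 (lam : ℂ) (hlam : ‖lam‖ < 1) (t : ℝ) :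
    Summable fun k : ℕ =>
      ‖lam - 1‖ ^ k * (k.factorial : ℝ) / (2 ^ k * ((2 * k).factorial : ℝ)) *
        |physHermite (2 * k) t| := by
  set r : ℝ := ‖lam - 1‖ with hrdef
  set u : ℝ := |t| with hudef
  have hu : 0 ≤ u := abs_nonneg t
  have hr0 : 0 ≤ r := norm_nonneg _
  have hr2 : r < 2 := by
    have h1 : ‖lam - 1‖ ≤ ‖lam‖ + ‖(1:ℂ)‖ := norm_sub_le lam 1
    simp only [norm_one] at h1
    calc r ≤ ‖lam‖ + 1 := h1
      _ < 2 := by linarith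
  set d : ℝ := 2 - r with hddef
  have hd : 0 < d := by simp [hddef]; linarith
  set q : ℝ := (r + 2) / 4 with hqdef
  have hq1 : q < 1 := by rw [hqdef, div_lt_one (by norm_num : (0:ℝ) < 4)]; linarith
  set b : ℕ → ℝ := fun k =>
    r ^ k * (k.factorial : ℝ) * auxG (2 * k) u / (2 ^ k * ((2 * k).factorial : ℝ)) with hbdef
  have hbnonneg : ∀ k, 0 ≤ b k := by
    intro k
    have := auxG_nonneg hu (2 * k)
    positivity
  -- summability of the majorant via the ratio test
  have hsum : Summable b := by
    apply summable_of_ratio_norm_eventually_le hq1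
    rw [Filter.eventually_atTop]
    refine ⟨⌈8 * u ^ 2 / d⌉₊ + ⌈128 * u ^ 2 / d ^ 2⌉₊ + 1, fun k hk => ?_⟩
    have hk1 : 8 * u ^ 2 ≤ d * k := by
      have h1 : (8 * u ^ 2 / d : ℝ) ≤ k := by
        calc (8 * u ^ 2 / d : ℝ) ≤ ⌈8 * u ^ 2 / d⌉₊ := Nat.le_ceil _
          _ ≤ k := by exact_mod_cast le_trans (by omega) hk
      rw [div_le_iff₀ hd] at h1
      linarith
    have hk2 : 8 * u * Real.sqrt (2 * k) ≤ d * k := by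
      have h1 : (128 * u ^ 2 / d ^ 2 : ℝ) ≤ k := by
        calc (128 * u ^ 2 / d ^ 2 : ℝ) ≤ ⌈128 * u ^ 2 / d ^ 2⌉₊ := Nat.le_ceil _
          _ ≤ k := by exact_mod_cast le_trans (by omega) hk
      rw [div_le_iff₀ (by positivity)] at h1
      have hkn : (0:ℝ) ≤ (k:ℝ) := Nat.cast_nonneg _
      have hsq : (8 * u * Real.sqrt (2 * k)) ^ 2 ≤ (d * k) ^ 2 := by
        rw [mul_pow, mul_pow, Real.sq_sqrt (by positivity : (0:ℝ) ≤ 2 * k)]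
        nlinarith
      have h2 : 8 * u * Real.sqrt (2 * k) = Real.sqrt ((8 * u * Real.sqrt (2 * k)) ^ 2) :=
        (Real.sqrt_sq (by positivity)).symm
      rw [h2]
      calc Real.sqrt ((8 * u * Real.sqrt (2 * k)) ^ 2) ≤ Real.sqrt ((d * k) ^ 2) :=
            Real.sqrt_le_sqrt hsq
        _ = d * k := Real.sqrt_sq (by positivity)
    -- the key scalar inequality
    have hscal : r * (4 * u ^ 2 + 4 * u * Real.sqrt (2 * k) + 4 * k + 2)
        ≤ (r + 2) * (2 * k + 1) := by
      nlinarith [mul_nonneg (sub_nonneg.2 hr2.le) (sq_nonneg u),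
        mul_nonneg (sub_nonneg.2 hr2.le) (mul_nonneg hu (Real.sqrt_nonneg (2 * (k:ℝ))))]
    have hG0 : 0 < auxG (2 * k) u := auxG_even_pos hu k
    have hG2 : 0 < auxG (2 * k + 2) u := by
      have := auxG_even_pos hu (k + 1)
      rwa [show 2 * (k + 1) = 2 * k + 2 by ring] at this
    have hfac2 : (((2 * (k + 1)).factorial : ℕ) : ℝ)
        = (2 * k + 2) * ((2 * k + 1) * ((2 * k).factorial : ℝ)) := by
      rw [show 2 * (k + 1) = (2 * k + 1) + 1 by ring, Nat.factorial_succ, Nat.factorial_succ]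
      push_cast; ring
    have hfac1 : (((k + 1).factorial : ℕ) : ℝ) = (k + 1) * (k.factorial : ℝ) := by
      rw [Nat.factorial_succ]; push_cast; ring
    have hb1 : b (k + 1)
        = (r * auxG (2 * k + 2) u / (4 * (2 * k + 1) * auxG (2 * k) u)) * b k := by
      rw [hbdef]
      simp only
      rw [show 2 * (k + 1) = 2 * k + 2 from by ring] 
      rw [show ((2 * (k+1)).factorial : ℝ) = ((2 * (k+1)).factorial : ℕ) from rfl] at *
      rw [show (2:ℝ) ^ (k+1) = 2 * 2 ^ k by ring]
      rw [show (((2 * k + 2).factorial : ℕ) : ℝ)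
            = (2 * k + 2) * ((2 * k + 1) * ((2 * k).factorial : ℝ)) from by
          rw [show 2 * k + 2 = (2 * k + 1) + 1 by ring, Nat.factorial_succ, Nat.factorial_succ]
          push_cast; ring, hfac1]
      have hkf : ((k.factorial : ℕ) : ℝ) ≠ 0 := by positivity
      have h2kf : (((2 * k).factorial : ℕ) : ℝ) ≠ 0 := by positivity
      field_simp
      ring
    have hratio : r * auxG (2 * k + 2) u / (4 * (2 * k + 1) * auxG (2 * k) u) ≤ q := by
      rw [div_le_iff₀ (by positivity)]
      have hstep := auxG_even_step hu k
      calc r * auxG (2 * k + 2) u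
          ≤ r * ((4 * u ^ 2 + 4 * u * Real.sqrt (2 * k) + 4 * k + 2) * auxG (2 * k) u) :=
            mul_le_mul_of_nonneg_left hstep hr0
        _ = (r * (4 * u ^ 2 + 4 * u * Real.sqrt (2 * k) + 4 * k + 2)) * auxG (2 * k) u := by
            ring
        _ ≤ ((r + 2) * (2 * k + 1)) * auxG (2 * k) u :=
            mul_le_mul_of_nonneg_right hscal hG0.le
        _ = q * (4 * (2 * k + 1) * auxG (2 * k) u) := by rw [hqdef]; ring
    have : b (k + 1) ≤ q * b k := by
      rw [hb1]
      exact mul_le_mul_of_nonneg_right hratio (hbnonneg k)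
    rw [Real.norm_of_nonneg (hbnonneg (k + 1)), Real.norm_of_nonneg (hbnonneg k)]
    exact this
  -- comparison
  refine hsum.of_nonneg_of_le (fun k => ?_) (fun k => ?_)
  · positivity
  · have hH := abs_physHermite_le t (2 * k)
    have hcoef : (0:ℝ) ≤ r ^ k * (k.factorial : ℝ) / (2 ^ k * ((2 * k).factorial : ℝ)) := by
      positivity
    calc r ^ k * (k.factorial : ℝ) / (2 ^ k * ((2 * k).factorial : ℝ)) * |physHermite (2 * k) t|
        ≤ r ^ k * (k.factorial : ℝ) / (2 ^ k * ((2 * k).factorial : ℝ)) * auxG (2 * k) u :=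
          mul_le_mul_of_nonneg_left hH hcoef
      _ = b k := by rw [hbdef]; ring
end

section
/- Let λ ∈ (−1,0), k, l ∈ ℕ, and let (c_n)_{n∈ℕ} be a sequence of complex numbers with |c_n| ≤ 1 for all n. Define W_k(r) := ∑_{n=0}^∞ c_n·K^λ_{n,n+k}(r) for r ∈ [0,∞). Then the function r ↦ W_k(r)·K^{1/λ}_{l,l+k}(r)·r is integrable on [0,∞), each function r ↦ K^λ_{n,n+k}(r)·K^{1/λ}_{l,l+k}(r)·r is integrable on [0,∞), and ∫_0^∞ W_k(r)·K^{1/λ}_{l,l+k}(r)·r dr = ∑_{n=0}^∞ c_n·∫_0^∞ K^λ_{n,n+k}(r)·K^{1/λ}_{l,l+k}(r)·r dr, the series on the right converging. -/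
open MeasureTheory Filter Finset

/-- The function `K^λ_{n,n+k}(r) = √(n!/(n+k)!) (1−λ)^{k+1} e^{−(1−λ)r²} r^k
·∑_{u=0}^n (λ^{n−u}/u!) C(n+k, n−u) (1−λ)^{2u} r^{2u}`. -/
noncomputable def Kfun (lam : ℂ) (n k : ℕ) (r : ℝ) : ℂ :=
  ((Real.sqrt ((n.factorial : ℝ) / ((n + k).factorial : ℝ)) : ℝ) : ℂ) * (1 - lam) ^ (k + 1) *
    Complex.exp (-(1 - lam) * (r : ℂ) ^ 2) * (r : ℂ) ^ k *
    ∑ u ∈ Finset.range (n + 1),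
      (lam ^ (n - u) / (u.factorial : ℂ)) * (((n + k).choose (n - u) : ℕ) : ℂ) *
        (1 - lam) ^ (2 * u) * (r : ℂ) ^ (2 * u)

lemma I1 (N : ℕ) : ∀ m : ℕ, ∑ v ∈ range (m+1), (-1:ℤ)^v * ((N+1).choose v : ℤ)
    = (-1)^m * (N.choose m : ℤ) := by
  intro m
  induction m with
  | zero => simp
  | succ m ih =>
    rw [Finset.sum_range_succ, ih, Nat.choose_succ_succ]
    push_cast
    ring

/-- key alternating convolution identity -/
lemma I2 (q : ℕ) : ∀ d m : ℕ, ∑ v ∈ range (m+1),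
    (-1:ℤ)^v * ((q+d+1).choose (m-v) : ℤ) * ((q+v).choose v : ℤ) = (d.choose m : ℤ) := by
  induction q with
  | zero =>
    intro d m
    simp only [Nat.zero_add, Nat.choose_self]
    have h := Finset.sum_range_reflect
      (fun v => (-1:ℤ)^v * ((d+1).choose (m-v) : ℤ) * ((0+v).choose v : ℤ)) (m+1)
    simp only [Nat.zero_add, Nat.choose_self, Nat.cast_one, mul_one] at h ⊢
    rw [← h]
    have : ∀ j ∈ range (m+1), (-1:ℤ)^(m+1-1-j) * ((d+1).choose (m-(m+1-1-j)) : ℤ)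
        = (-1:ℤ)^m * ((-1:ℤ)^j * ((d+1).choose j : ℤ)) := by
      intro j hj
      rw [Finset.mem_range] at hj
      have h1 : m+1-1-j = m - j := by omega
      have h2 : m - (m - j) = j := by omega
      rw [h1, h2]
      have h3 : (-1:ℤ)^(m-j) * (-1:ℤ)^j = (-1:ℤ)^m := by
        rw [← pow_add]; congr 1; omega
      have h4 : (-1:ℤ)^j * (-1:ℤ)^j = 1 := by
        rw [← pow_add, ← two_mul, pow_mul]; norm_num
      calc (-1:ℤ)^(m-j) * ((d+1).choose j : ℤ)
          = ((-1:ℤ)^(m-j) * (-1:ℤ)^j) * ((-1:ℤ)^j * ((d+1).choose j : ℤ)) := by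
            rw [← mul_assoc, mul_assoc ((-1:ℤ)^(m-j)), h4, mul_one]
        _ = (-1:ℤ)^m * ((-1:ℤ)^j * ((d+1).choose j : ℤ)) := by rw [h3]
    rw [Finset.sum_congr rfl this, ← Finset.mul_sum, I1 d m, ← mul_assoc]
    have h4 : (-1:ℤ)^m * (-1:ℤ)^m = 1 := by
      rw [← pow_add, ← two_mul, pow_mul]; norm_num
    rw [h4, one_mul]
  | succ q ihq =>
    intro d m
    induction m with
    | zero => simp
    | succ m ihm =>
      -- peel v = 0
      rw [Finset.sum_range_succ'
        (fun v => (-1:ℤ)^v * ((q+1+d+1).choose (m+1-v) : ℤ) * ((q+1+v).choose v : ℤ)) (m+1)]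
      have hpeel : ∀ v ∈ range (m+1),
          (-1:ℤ)^(v+1) * ((q+1+d+1).choose (m+1-(v+1)) : ℤ) * ((q+1+(v+1)).choose (v+1) : ℤ)
          = -((-1:ℤ)^v * ((q+1+d+1).choose (m-v) : ℤ) * (((q+1+v).choose v : ℤ)
              + ((q+1+v).choose (v+1) : ℤ))) := by
        intro v hv
        have h1 : m+1-(v+1) = m - v := by omega
        have h2 : (q+1+(v+1)).choose (v+1) = (q+1+v).choose v + (q+1+v).choose (v+1) := by
          have : q+1+(v+1) = (q+1+v)+1 := by omega
          rw [this, Nat.choose_succ_succ]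
        rw [h1, h2]
        push_cast
        ring
      rw [Finset.sum_congr rfl hpeel, Finset.sum_neg_distrib]
      -- split the sum
      have hsplit : ∑ v ∈ range (m+1), (-1:ℤ)^v * ((q+1+d+1).choose (m-v) : ℤ)
            * (((q+1+v).choose v : ℤ) + ((q+1+v).choose (v+1) : ℤ))
          = (∑ v ∈ range (m+1), (-1:ℤ)^v * ((q+1+d+1).choose (m-v) : ℤ) * ((q+1+v).choose v : ℤ))
          + ∑ v ∈ range (m+1), (-1:ℤ)^v * ((q+1+d+1).choose (m-v) : ℤ)
              * ((q+1+v).choose (v+1) : ℤ) := by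
        rw [← Finset.sum_add_distrib]
        exact Finset.sum_congr rfl (fun v hv => by ring)
      rw [hsplit]
      -- first sum is ihm (the inner IH):
      have e1 : ∑ v ∈ range (m+1), (-1:ℤ)^v * ((q+1+d+1).choose (m-v) : ℤ)
          * ((q+1+v).choose v : ℤ) = (d.choose m : ℤ) := ihm
      -- second sum: from outer IH at (d+1, m+1)
      have hB := ihq (d+1) (m+1)
      rw [Finset.sum_range_succ'
        (fun v => (-1:ℤ)^v * ((q+(d+1)+1).choose (m+1-v) : ℤ) * ((q+v).choose v : ℤ)) (m+1)] at hB
      have hq1 : q+(d+1)+1 = q+1+d+1 := by omega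
      have hpeel2 : ∀ v ∈ range (m+1),
          (-1:ℤ)^(v+1) * ((q+(d+1)+1).choose (m+1-(v+1)) : ℤ) * ((q+(v+1)).choose (v+1) : ℤ)
          = -((-1:ℤ)^v * ((q+1+d+1).choose (m-v) : ℤ) * ((q+1+v).choose (v+1) : ℤ)) := by
        intro v hv
        have h1 : m+1-(v+1) = m - v := by omega
        have h2 : q+(v+1) = q+1+v := by omega
        rw [h1, h2, hq1]
        push_cast
        ring
      rw [Finset.sum_congr rfl hpeel2, Finset.sum_neg_distrib] at hB
      simp only [pow_zero, one_mul, Nat.sub_zero, Nat.choose_zero_right, Nat.cast_one,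
        mul_one, hq1] at hB ⊢
      -- hB : -(second sum) + C(q+1+d+1, m+1) = C(d+1, m+1)
      have e2 : ∑ v ∈ range (m+1), (-1:ℤ)^v * ((q+1+d+1).choose (m-v) : ℤ)
          * ((q+1+v).choose (v+1) : ℤ)
          = ((q+1+d+1).choose (m+1) : ℤ) - ((d+1).choose (m+1) : ℤ) := by linarith [hB]
      rw [e1, e2]
      have : (d+1).choose (m+1) = d.choose m + d.choose (m+1) := Nat.choose_succ_succ d m
      rw [this]
      push_cast
      ring

lemma I3 (N : ℕ) : ∀ m : ℕ, ∑ v ∈ range (m+1),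
    (-1:ℤ)^v * (N.choose (m-v) : ℤ) * ((N+v).choose v : ℤ) = (-1:ℤ)^m := by
  cases N with
  | zero =>
    intro m
    rw [Finset.sum_range_succ]
    have : ∀ v ∈ range m, (-1:ℤ)^v * ((0:ℕ).choose (m-v) : ℤ) * ((0+v).choose v : ℤ) = 0 := by
      intro v hv
      rw [Finset.mem_range] at hv
      have : (0:ℕ).choose (m-v) = 0 := Nat.choose_eq_zero_of_lt (by omega)
      rw [this]
      push_cast
      ring
    rw [Finset.sum_congr rfl this]
    simp
  | succ N' =>
    intro m
    induction m with
    | zero => simp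
    | succ m ihm =>
      rw [Finset.sum_range_succ'
        (fun v => (-1:ℤ)^v * ((N'+1).choose (m+1-v) : ℤ) * ((N'+1+v).choose v : ℤ)) (m+1)]
      have hpeel : ∀ v ∈ range (m+1),
          (-1:ℤ)^(v+1) * ((N'+1).choose (m+1-(v+1)) : ℤ) * ((N'+1+(v+1)).choose (v+1) : ℤ)
          = -((-1:ℤ)^v * ((N'+1).choose (m-v) : ℤ) * (((N'+1+v).choose v : ℤ)
              + ((N'+1+v).choose (v+1) : ℤ))) := by
        intro v hv
        have h1 : m+1-(v+1) = m - v := by omega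
        have h2 : (N'+1+(v+1)).choose (v+1) = (N'+1+v).choose v + (N'+1+v).choose (v+1) := by
          have : N'+1+(v+1) = (N'+1+v)+1 := by omega
          rw [this, Nat.choose_succ_succ]
        rw [h1, h2]
        push_cast
        ring
      rw [Finset.sum_congr rfl hpeel, Finset.sum_neg_distrib]
      have hsplit : ∑ v ∈ range (m+1), (-1:ℤ)^v * ((N'+1).choose (m-v) : ℤ)
            * (((N'+1+v).choose v : ℤ) + ((N'+1+v).choose (v+1) : ℤ))
          = (∑ v ∈ range (m+1), (-1:ℤ)^v * ((N'+1).choose (m-v) : ℤ) * ((N'+1+v).choose v : ℤ))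
          + ∑ v ∈ range (m+1), (-1:ℤ)^v * ((N'+1).choose (m-v) : ℤ)
              * ((N'+1+v).choose (v+1) : ℤ) := by
        rw [← Finset.sum_add_distrib]
        exact Finset.sum_congr rfl (fun v hv => by ring)
      rw [hsplit, ihm]
      -- second sum = C(N'+1, m+1) via I2 with d = 0
      have hA := I2 N' 0 (m+1)
      rw [Finset.sum_range_succ'
        (fun v => (-1:ℤ)^v * ((N'+0+1).choose (m+1-v) : ℤ) * ((N'+v).choose v : ℤ)) (m+1)] at hA
      have hpeel2 : ∀ v ∈ range (m+1),
          (-1:ℤ)^(v+1) * ((N'+0+1).choose (m+1-(v+1)) : ℤ) * ((N'+(v+1)).choose (v+1) : ℤ)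
          = -((-1:ℤ)^v * ((N'+1).choose (m-v) : ℤ) * ((N'+1+v).choose (v+1) : ℤ)) := by
        intro v hv
        have h1 : m+1-(v+1) = m - v := by omega
        have h2 : N'+(v+1) = N'+1+v := by omega
        have h3 : N'+0+1 = N'+1 := by omega
        rw [h1, h2, h3]
        push_cast
        ring
      rw [Finset.sum_congr rfl hpeel2, Finset.sum_neg_distrib] at hA
      simp only [pow_zero, one_mul, Nat.sub_zero, Nat.choose_zero_right, Nat.cast_one, mul_one,
        Nat.choose_eq_zero_of_lt (Nat.succ_pos m), Nat.cast_zero, Nat.add_zero] at hA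
      -- hA : -(sum) + (N'+1).choose (m+1) = 0
      have e2 : ∑ v ∈ range (m+1), (-1:ℤ)^v * ((N'+1).choose (m-v) : ℤ)
          * ((N'+1+v).choose (v+1) : ℤ) = ((N'+1).choose (m+1) : ℤ) := by linarith [hA]
      rw [e2]
      simp only [pow_zero, one_mul, Nat.sub_zero, Nat.add_zero, Nat.choose_zero_right,
        Nat.cast_one, mul_one]
      ring

lemma SId (n k : ℕ) : ∑ u ∈ range (n+1), ∑ v ∈ range (n+1),
    (-1:ℝ)^u * (-1:ℝ)^v / ((u.factorial : ℝ) * (v.factorial : ℝ))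
      * ((n+k).choose (n-u) : ℝ) * ((n+k).choose (n-v) : ℝ) * ((k+u+v).factorial : ℝ)
    = ((n+k).factorial : ℝ) / (n.factorial : ℝ) := by
  have hinner : ∀ u ∈ range (n+1), ∑ v ∈ range (n+1),
      (-1:ℝ)^u * (-1:ℝ)^v / ((u.factorial : ℝ) * (v.factorial : ℝ))
        * ((n+k).choose (n-u) : ℝ) * ((n+k).choose (n-v) : ℝ) * ((k+u+v).factorial : ℝ)
      = (-1:ℝ)^u / (u.factorial : ℝ) * ((n+k).choose (n-u) : ℝ) * ((k+u).factorial : ℝ)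
        * ((∑ v ∈ range (n+1), (-1:ℤ)^v * ((n+k).choose (n-v) : ℤ)
            * (((k+u)+v).choose v : ℤ) : ℤ) : ℝ) := by
    intro u _
    rw [Int.cast_sum, Finset.mul_sum]
    refine Finset.sum_congr rfl (fun v _ => ?_)
    have hfac : ((k+u+v).factorial : ℝ)
        = ((k+u+v).choose v : ℝ) * (v.factorial : ℝ) * ((k+u).factorial : ℝ) := by
      have h := Nat.choose_mul_factorial_mul_factorial (show v ≤ k+u+v by omega)
      have h2 : k+u+v-v = k+u := by omega
      rw [h2] at h
      exact_mod_cast h.symm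
    rw [hfac]
    have hv : (v.factorial : ℝ) ≠ 0 := Nat.cast_ne_zero.2 (Nat.factorial_ne_zero v)
    have hku : (k+u)+v = k+u+v := by omega
    push_cast
    rw [hku]
    field_simp
  rw [Finset.sum_congr rfl hinner, Finset.sum_range_succ]
  have hzero : ∀ u ∈ range n, (-1:ℝ)^u / (u.factorial : ℝ) * ((n+k).choose (n-u) : ℝ)
        * ((k+u).factorial : ℝ)
        * ((∑ v ∈ range (n+1), (-1:ℤ)^v * ((n+k).choose (n-v) : ℤ)
            * (((k+u)+v).choose v : ℤ) : ℤ) : ℝ) = 0 := by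
    intro u hu
    rw [Finset.mem_range] at hu
    have hq : (k+u) + (n-u-1) + 1 = n+k := by omega
    have := I2 (k+u) (n-u-1) n
    rw [hq] at this
    rw [this]
    have : (n-u-1).choose n = 0 := Nat.choose_eq_zero_of_lt (by omega)
    rw [this]
    push_cast
    ring
  rw [Finset.sum_congr rfl hzero, Finset.sum_const, smul_zero, zero_add]
  have hnk : ∀ v : ℕ, (k+n)+v = (n+k)+v := fun v => by omega
  simp only [hnk]
  rw [I3 (n+k) n]
  have hnn : n - n = 0 := by omega
  rw [hnn, Nat.choose_zero_right, Nat.add_comm k n]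
  have h2 : (-1:ℝ)^n * (-1:ℝ)^n = 1 := by
    rw [← pow_add, ← two_mul, pow_mul]; norm_num
  have hn0 : (n.factorial : ℝ) ≠ 0 := Nat.cast_ne_zero.2 (Nat.factorial_ne_zero n)
  push_cast
  field_simp
  linear_combination h2

noncomputable def Lag (n k : ℕ) (x : ℝ) : ℝ :=
  ∑ u ∈ Finset.range (n+1), (-1:ℝ)^u / u.factorial * ((n+k).choose (n-u)) * x^u

lemma Kfun_eq (b : ℝ) (hb : 0 < b) (n k : ℕ) (r : ℝ) :
    Kfun ((-b : ℝ) : ℂ) n k r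
      = ((Real.sqrt (n.factorial / (n+k).factorial) * (1+b)^(k+1)
          * Real.exp (-(1+b)*r^2) * r^k * (-b)^n * Lag n k ((1+b)^2/b * r^2) : ℝ) : ℂ) := by
  have hexp : Complex.exp (-(1 - ((-b : ℝ) : ℂ)) * (r:ℂ)^2) = ((Real.exp (-(1+b)*r^2) : ℝ) : ℂ) := by
    rw [Complex.ofReal_exp]
    congr 1
    push_cast
    ring
  have hbz : (b : ℂ) ≠ 0 := by
    simp only [ne_eq, Complex.ofReal_eq_zero]
    exact hb.ne'
  have hsum : ∑ u ∈ Finset.range (n+1),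
      (((-b : ℝ) : ℂ)^(n-u) / (u.factorial : ℂ) * (((n+k).choose (n-u) : ℕ) : ℂ)
        * (1 - ((-b : ℝ) : ℂ))^(2*u) * (r:ℂ)^(2*u))
      = ((-b : ℝ) : ℂ)^n * ∑ u ∈ Finset.range (n+1),
          ((-1:ℂ)^u / (u.factorial : ℂ) * (((n+k).choose (n-u) : ℕ) : ℂ)
            * ((((1+b)^2/b * r^2 : ℝ)) : ℂ)^u) := by
    rw [Finset.mul_sum]
    refine Finset.sum_congr rfl fun u hu => ?_
    have hu' : u ≤ n := by rw [Finset.mem_range] at hu; omega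
    have hpow : ((-b : ℝ) : ℂ)^n = ((-b : ℝ) : ℂ)^(n-u) * ((-b : ℝ) : ℂ)^u := by
      rw [← pow_add]; congr 1; omega
    have hfz : (u.factorial : ℂ) ≠ 0 := Nat.cast_ne_zero.2 (Nat.factorial_ne_zero u)
    rw [hpow]
    have hx : ((((1+b)^2/b * r^2 : ℝ)) : ℂ)^u
        = (((1+b:ℝ):ℂ)^2)^u * ((r:ℂ)^2)^u / ((b:ℝ):ℂ)^u := by
      push_cast
      rw [div_mul_eq_mul_div, div_pow, mul_pow]
    have h1b : (1 - ((-b : ℝ) : ℂ)) = ((1+b : ℝ) : ℂ) := by push_cast; ring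
    have hcast : ((-b : ℝ) : ℂ) = -(b:ℂ) := by push_cast; ring
    rw [hx, h1b, pow_mul (((1+b : ℝ)) : ℂ) 2 u, pow_mul (r:ℂ) 2 u, hcast]
    rw [neg_pow (b:ℂ) (n-u), neg_pow (b:ℂ) u]
    field_simp
    rcases Nat.even_or_odd u with h | h
    · rw [h.neg_one_pow]; ring
    · rw [h.neg_one_pow]; ring
  unfold Kfun Lag
  rw [hexp, hsum]
  push_cast
  ring

lemma moment {cc : ℝ} (hcc : 0 < cc) (j : ℕ) :
    ∫ r in Set.Ioi (0:ℝ), r^(2*j+1) * Real.exp (-cc*r^2)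
      = (j.factorial : ℝ)/(2*cc^(j+1)) := by
  have h := integral_rpow_mul_exp_neg_mul_rpow (p := 2) (q := ((2*j+1 : ℕ) : ℝ))
    two_pos (by have := Nat.cast_nonneg (α := ℝ) (2*j+1); linarith) hcc
  have hL : ∫ x in Set.Ioi (0:ℝ), x ^ (((2*j+1 : ℕ)) : ℝ) * Real.exp (-cc * x ^ (2:ℝ))
      = ∫ r in Set.Ioi (0:ℝ), r^(2*j+1) * Real.exp (-cc*r^2) := by
    refine setIntegral_congr_fun measurableSet_Ioi (fun x hx => ?_)
    rw [Real.rpow_natCast, show (2:ℝ) = ((2:ℕ):ℝ) by norm_num, Real.rpow_natCast]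
  rw [hL] at h
  rw [h]
  have hq : -((((2*j+1 : ℕ)) : ℝ) + 1)/2 = -(((j+1 : ℕ)) : ℝ) := by push_cast; ring
  have hq2 : ((((2*j+1 : ℕ)) : ℝ) + 1)/2 = (j : ℝ) + 1 := by push_cast; ring
  rw [hq, hq2, Real.rpow_neg hcc.le, Real.rpow_natCast, Real.Gamma_nat_eq_factorial]
  have : cc^(j+1) ≠ 0 := by positivity
  field_simp

lemma intOn_term {cc : ℝ} (hcc : 0 < cc) (m : ℕ) :
    IntegrableOn (fun r : ℝ => r^m * Real.exp (-cc*r^2)) (Set.Ioi 0) := by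
  have h := integrableOn_rpow_mul_exp_neg_mul_sq hcc (s := (m:ℝ)) (by have := Nat.cast_nonneg (α := ℝ) m; linarith)
  exact h.congr_fun (fun x hx => by simp only [Real.rpow_natCast]) measurableSet_Ioi

lemma lag_sq_expand (n k : ℕ) (cc r : ℝ) :
    Real.exp (-cc*r^2) * r^(2*k+1) * (Lag n k (cc*r^2))^2
    = ∑ u ∈ Finset.range (n+1), ∑ v ∈ Finset.range (n+1),
        ((-1:ℝ)^u * (-1:ℝ)^v / ((u.factorial : ℝ) * (v.factorial : ℝ))
          * ((n+k).choose (n-u) : ℝ) * ((n+k).choose (n-v) : ℝ) * cc^(u+v))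
        * (r^(2*(k+u+v)+1) * Real.exp (-cc*r^2)) := by
  rw [pow_two (Lag n k (cc*r^2))]
  simp only [Lag]
  rw [Finset.sum_mul_sum]
  simp only [Finset.mul_sum]
  refine Finset.sum_congr rfl fun u hu => ?_
  refine Finset.sum_congr rfl fun v hv => ?_
  ring

lemma intOn_En (k n : ℕ) {cc : ℝ} (hcc : 0 < cc) :
    IntegrableOn (fun r : ℝ => Real.exp (-cc*r^2) * r^(2*k+1) * (Lag n k (cc*r^2))^2)
      (Set.Ioi 0) := by
  have heq : (fun r : ℝ => Real.exp (-cc*r^2) * r^(2*k+1) * (Lag n k (cc*r^2))^2)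
      = fun r => ∑ u ∈ Finset.range (n+1), ∑ v ∈ Finset.range (n+1),
        ((-1:ℝ)^u * (-1:ℝ)^v / ((u.factorial : ℝ) * (v.factorial : ℝ))
          * ((n+k).choose (n-u) : ℝ) * ((n+k).choose (n-v) : ℝ) * cc^(u+v))
        * (r^(2*(k+u+v)+1) * Real.exp (-cc*r^2)) := funext fun r => lag_sq_expand n k cc r
  rw [heq]
  exact integrable_finset_sum _ (fun u _ =>
    integrable_finset_sum _ (fun v _ => (intOn_term hcc _).const_mul _))

lemma val_En (k n : ℕ) {cc : ℝ} (hcc : 0 < cc) :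
    ∫ r in Set.Ioi (0:ℝ), Real.exp (-cc*r^2) * r^(2*k+1) * (Lag n k (cc*r^2))^2
      = ((n+k).factorial : ℝ) / (n.factorial : ℝ) / (2*cc^(k+1)) := by
  simp only [lag_sq_expand n k cc]
  rw [integral_finset_sum _ (fun u _ => integrable_finset_sum _
    (fun v _ => (intOn_term hcc _).const_mul _))]
  have houter : ∀ u ∈ Finset.range (n+1),
      (∫ r in Set.Ioi (0:ℝ), ∑ v ∈ Finset.range (n+1),
        ((-1:ℝ)^u * (-1:ℝ)^v / ((u.factorial : ℝ) * (v.factorial : ℝ))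
          * ((n+k).choose (n-u) : ℝ) * ((n+k).choose (n-v) : ℝ) * cc^(u+v))
        * (r^(2*(k+u+v)+1) * Real.exp (-cc*r^2)))
      = ∑ v ∈ Finset.range (n+1), (1/(2*cc^(k+1))) * ((-1:ℝ)^u * (-1:ℝ)^v
          / ((u.factorial : ℝ) * (v.factorial : ℝ))
          * ((n+k).choose (n-u) : ℝ) * ((n+k).choose (n-v) : ℝ)
          * ((k+u+v).factorial : ℝ)) := by
    intro u hu
    rw [integral_finset_sum _ (fun v _ => (intOn_term hcc _).const_mul _)]
    refine Finset.sum_congr rfl fun v hv => ?_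
    rw [integral_const_mul, moment hcc (k+u+v)]
    have hp1 : (u.factorial : ℝ) ≠ 0 := Nat.cast_ne_zero.2 (Nat.factorial_ne_zero _)
    have hp2 : (v.factorial : ℝ) ≠ 0 := Nat.cast_ne_zero.2 (Nat.factorial_ne_zero _)
    have hpow : cc^(k+u+v+1) = cc^(k+1) * cc^(u+v) := by
      rw [← pow_add]; congr 1; omega
    rw [hpow]
    have h1 : cc^(k+1) ≠ 0 := by positivity
    have h2 : cc^(u+v) ≠ 0 := by positivity
    field_simp
  rw [Finset.sum_congr rfl houter]
  simp only [← Finset.mul_sum]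
  rw [SId n k]
  ring

lemma choose_bound (n k u : ℕ) (hu : u ≤ n) :
    ((n+k).choose (n-u) : ℝ)
      ≤ ((n:ℝ)+k)^k * ((n:ℝ)+k)^u / ((k.factorial : ℝ) * (u.factorial : ℝ)) := by
  have hsym : (n+k).choose (n-u) = (n+k).choose (k+u) := by
    have h1 : (n+k).choose ((n+k) - (n-u)) = (n+k).choose (n-u) :=
      Nat.choose_symm (by omega)
    have h2 : (n+k) - (n-u) = k+u := by omega
    rw [h2] at h1
    exact h1.symm
  rw [hsym]
  have hdesc : (n+k).choose (k+u) * (k+u).factorial ≤ (n+k)^(k+u) := by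
    have h := Nat.descFactorial_le_pow (n+k) (k+u)
    rw [Nat.descFactorial_eq_factorial_mul_choose] at h
    calc (n+k).choose (k+u) * (k+u).factorial
        = (k+u).factorial * (n+k).choose (k+u) := by ring
      _ ≤ (n+k)^(k+u) := h
  have hff : (k.factorial : ℝ) * (u.factorial : ℝ) ≤ ((k+u).factorial : ℝ) := by
    exact_mod_cast Nat.le_of_dvd (Nat.factorial_pos _)
      (Nat.factorial_mul_factorial_dvd_factorial_add k u)
  have hpos : (0:ℝ) < (k.factorial : ℝ) * (u.factorial : ℝ) := by positivity
  rw [le_div_iff₀ hpos]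
  calc ((n+k).choose (k+u) : ℝ) * ((k.factorial : ℝ) * (u.factorial : ℝ))
      ≤ ((n+k).choose (k+u) : ℝ) * ((k+u).factorial : ℝ) :=
        mul_le_mul_of_nonneg_left hff (Nat.cast_nonneg _)
    _ ≤ ((n+k:ℕ):ℝ)^(k+u) := by exact_mod_cast hdesc
    _ = ((n:ℝ)+k)^k * ((n:ℝ)+k)^u := by push_cast; rw [pow_add]

lemma Lag_bound (n k : ℕ) (x : ℝ) (hx : 0 ≤ x) :
    |Lag n k x| ≤ ((n:ℝ)+k)^k / k.factorial
      * Real.exp (2 * Real.sqrt (((n:ℝ)+k) * x)) := by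
  have hnk : (0:ℝ) ≤ (n:ℝ)+k := by positivity
  have htnn : (0:ℝ) ≤ ((n:ℝ)+k) * x := mul_nonneg hnk hx
  have h1 : |Lag n k x| ≤ ∑ u ∈ Finset.range (n+1),
      ((n+k).choose (n-u) : ℝ) * x^u / u.factorial := by
    refine (Finset.abs_sum_le_sum_abs _ _).trans (Finset.sum_le_sum fun u hu => le_of_eq ?_)
    rw [abs_mul, abs_mul, abs_div, abs_pow, abs_neg, abs_one, one_pow,
      abs_of_nonneg (pow_nonneg hx u), Nat.abs_cast, Nat.abs_cast]
    ring
  have h2 : ∑ u ∈ Finset.range (n+1), ((n+k).choose (n-u) : ℝ) * x^u / u.factorial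
      ≤ ((n:ℝ)+k)^k / k.factorial * ∑ u ∈ Finset.range (n+1),
          (((n:ℝ)+k) * x)^u / ((u.factorial : ℝ))^2 := by
    rw [Finset.mul_sum]
    refine Finset.sum_le_sum fun u hu => ?_
    have hu' : u ≤ n := by rw [Finset.mem_range] at hu; omega
    calc ((n+k).choose (n-u) : ℝ) * x^u / u.factorial
        = ((n+k).choose (n-u) : ℝ) * (x^u / u.factorial) := by ring
      _ ≤ (((n:ℝ)+k)^k * ((n:ℝ)+k)^u / ((k.factorial : ℝ) * (u.factorial : ℝ)))
            * (x^u / u.factorial) := by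
          refine mul_le_mul_of_nonneg_right (choose_bound n k u hu') (by positivity)
      _ = ((n:ℝ)+k)^k / k.factorial * ((((n:ℝ)+k) * x)^u / ((u.factorial : ℝ))^2) := by
          rw [mul_pow]; ring
  have h3 : ∑ u ∈ Finset.range (n+1), (((n:ℝ)+k) * x)^u / ((u.factorial : ℝ))^2
      ≤ (∑ u ∈ Finset.range (n+1), (Real.sqrt (((n:ℝ)+k) * x))^u / u.factorial)^2 := by
    have heq : ∀ u ∈ Finset.range (n+1), (((n:ℝ)+k) * x)^u / ((u.factorial : ℝ))^2
        = ((Real.sqrt (((n:ℝ)+k) * x))^u / u.factorial)^2 := by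
      intro u _
      rw [div_pow, ← pow_mul, mul_comm u 2, pow_mul, Real.sq_sqrt htnn]
    rw [Finset.sum_congr rfl heq]
    exact Finset.sum_sq_le_sq_sum_of_nonneg (fun u _ => by positivity)
  have h4 : ∑ u ∈ Finset.range (n+1), (Real.sqrt (((n:ℝ)+k) * x))^u / u.factorial
      ≤ Real.exp (Real.sqrt (((n:ℝ)+k) * x)) :=
    Real.sum_le_exp_of_nonneg (Real.sqrt_nonneg _) (n+1)
  have h5 : (∑ u ∈ Finset.range (n+1), (Real.sqrt (((n:ℝ)+k) * x))^u / u.factorial)^2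
      ≤ Real.exp (2 * Real.sqrt (((n:ℝ)+k) * x)) := by
    have hsnn : (0:ℝ) ≤ ∑ u ∈ Finset.range (n+1),
        (Real.sqrt (((n:ℝ)+k) * x))^u / u.factorial :=
      Finset.sum_nonneg fun u _ => by positivity
    calc (∑ u ∈ Finset.range (n+1), (Real.sqrt (((n:ℝ)+k) * x))^u / u.factorial)^2
        ≤ (Real.exp (Real.sqrt (((n:ℝ)+k) * x)))^2 := by
          exact pow_le_pow_left₀ hsnn h4 2
      _ = Real.exp (2 * Real.sqrt (((n:ℝ)+k) * x)) := by
          rw [sq, ← Real.exp_add]; ring_nf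
  calc |Lag n k x| ≤ ((n:ℝ)+k)^k / k.factorial * ∑ u ∈ Finset.range (n+1),
          (((n:ℝ)+k) * x)^u / ((u.factorial : ℝ))^2 := h1.trans h2
    _ ≤ ((n:ℝ)+k)^k / k.factorial * Real.exp (2 * Real.sqrt (((n:ℝ)+k) * x)) := by
        exact mul_le_mul_of_nonneg_left (h3.trans h5) (by positivity)

lemma summable_shift (σ : ℝ) (h0 : 0 ≤ σ) (h1 : σ < 1) (k : ℕ) :
    Summable (fun n : ℕ => ((n:ℝ)+k)^k * σ^n) := by
  have hgeom : ∀ i : ℕ, Summable (fun n : ℕ => ((n:ℝ))^i * σ^n) := fun i =>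
    summable_pow_mul_geometric_of_norm_lt_one i
      (by rwa [Real.norm_eq_abs, abs_of_nonneg h0])
  have heq : (fun n : ℕ => ((n:ℝ)+k)^k * σ^n)
      = fun n : ℕ => ∑ i ∈ Finset.range (k+1),
          ((k:ℝ)^(k-i) * (k.choose i)) * (((n:ℝ))^i * σ^n) := by
    funext n
    rw [add_pow, Finset.sum_mul]
    refine Finset.sum_congr rfl fun i _ => ?_
    ring
  rw [heq]
  exact summable_sum fun i _ => ((hgeom i).mul_left _)

lemma summable_aLag (k : ℕ) {a : ℝ} (ha : 0 < a) (ha1 : a < 1) {x : ℝ} (hx : 0 ≤ x) :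
    Summable (fun n : ℕ => a^n * |Lag n k x|) := by
  set σ : ℝ := (1+a)/2 with hσdef
  have hσ0 : 0 < σ := by rw [hσdef]; linarith
  have hσ1 : σ < 1 := by rw [hσdef]; linarith
  have haσ : a < σ := by rw [hσdef]; linarith
  set ε : ℝ := Real.log (σ/a) with hεdef
  have hε0 : 0 < ε := Real.log_pos (by rw [lt_div_iff₀ ha]; linarith)
  have hexpε : Real.exp ε = σ/a := Real.exp_log (by positivity)
  have hmaj : Summable (fun n : ℕ =>
      (Real.exp (x/ε) * Real.exp (ε*k) / k.factorial) * (((n:ℝ)+k)^k * σ^n)) :=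
    (summable_shift σ hσ0.le hσ1 k).mul_left _
  refine Summable.of_nonneg_of_le (fun n => by positivity) (fun n => ?_) hmaj
  have h2s : 2 * Real.sqrt (((n:ℝ)+k) * x) ≤ ε*((n:ℝ)+k) + x/ε := by
    have h := two_mul_le_add_sq (Real.sqrt (ε*((n:ℝ)+k))) (Real.sqrt (x/ε))
    rw [Real.sq_sqrt (by positivity), Real.sq_sqrt (by positivity)] at h
    have hs : Real.sqrt (ε*((n:ℝ)+k)) * Real.sqrt (x/ε) = Real.sqrt (((n:ℝ)+k) * x) := by
      rw [← Real.sqrt_mul (by positivity)]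
      congr 1
      field_simp
    calc 2 * Real.sqrt (((n:ℝ)+k) * x) = 2 * Real.sqrt (ε*((n:ℝ)+k)) * Real.sqrt (x/ε) := by
          rw [mul_assoc, hs]
      _ ≤ ε*((n:ℝ)+k) + x/ε := h
  calc a^n * |Lag n k x|
      ≤ a^n * (((n:ℝ)+k)^k / k.factorial * Real.exp (2 * Real.sqrt (((n:ℝ)+k) * x))) :=
        mul_le_mul_of_nonneg_left (Lag_bound n k x hx) (by positivity)
    _ ≤ a^n * (((n:ℝ)+k)^k / k.factorial * Real.exp (ε*((n:ℝ)+k) + x/ε)) := by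
        refine mul_le_mul_of_nonneg_left (mul_le_mul_of_nonneg_left
          (Real.exp_le_exp.2 h2s) (by positivity)) (by positivity)
    _ = (Real.exp (x/ε) * Real.exp (ε*k) / k.factorial) * (((n:ℝ)+k)^k * (a * Real.exp ε)^n) := by
        rw [mul_pow, ← Real.exp_nat_mul]
        rw [show ε*((n:ℝ)+k) + x/ε = (n:ℝ)*ε + (ε*k + x/ε) by ring, Real.exp_add, Real.exp_add]
        ring
    _ = (Real.exp (x/ε) * Real.exp (ε*k) / k.factorial) * (((n:ℝ)+k)^k * σ^n) := by
        rw [hexpε, mul_div_cancel₀ σ ha.ne']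


lemma norm_Kfun (b : ℝ) (hb : 0 < b) (n k : ℕ) (r : ℝ) (hr : 0 ≤ r) :
    ‖Kfun ((-b : ℝ) : ℂ) n k r‖
    = Real.sqrt (n.factorial / (n+k).factorial) * ((1+b)^(k+1) * Real.exp (-(1+b)*r^2)
      * r^k * b^n * |Lag n k ((1+b)^2/b * r^2)|) := by
  rw [Kfun_eq b hb, Complex.norm_real, Real.norm_eq_abs, abs_mul, abs_mul, abs_mul, abs_mul,
    abs_mul, abs_of_nonneg (Real.sqrt_nonneg _),
    abs_of_nonneg (le_of_lt (pow_pos (by linarith : (0:ℝ) < 1+b) (k+1))),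
    abs_of_nonneg (Real.exp_pos _).le, abs_of_nonneg (pow_nonneg hr k), abs_pow, abs_neg,
    abs_of_nonneg hb.le]
  ring

lemma fact_ratio (n k : ℕ) : ((n+k).factorial : ℝ) ≤ ((n:ℝ)+k)^k * n.factorial := by
  induction k with
  | zero => simp
  | succ k ih =>
    have hstep : ((n+(k+1)).factorial : ℝ) = ((n:ℝ)+k+1) * ((n+k).factorial : ℝ) := by
      rw [show n+(k+1) = (n+k)+1 by omega, Nat.factorial_succ]; push_cast; ring
    rw [hstep]
    have h1 : ((n:ℝ)+k)^k ≤ ((n:ℝ)+k+1)^k := pow_le_pow_left₀ (by positivity) (by linarith) k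
    have h2 : ((n:ℝ)+(k+1))^(k+1) = ((n:ℝ)+k+1) * ((n:ℝ)+k+1)^k := by
      rw [show ((n:ℝ)+(k+1)) = (n:ℝ)+k+1 by ring, pow_succ]; ring
    calc ((n:ℝ)+k+1) * ((n+k).factorial : ℝ)
        ≤ ((n:ℝ)+k+1) * (((n:ℝ)+k)^k * n.factorial) :=
          mul_le_mul_of_nonneg_left ih (by positivity)
      _ ≤ ((n:ℝ)+k+1)^(k+1) * n.factorial := by
          rw [pow_succ]
          have h3 := mul_le_mul_of_nonneg_left h1 (show (0:ℝ) ≤ (n:ℝ)+k+1 by positivity)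
          nlinarith [Nat.cast_nonneg (α := ℝ) n.factorial]
      _ = ((n:ℝ)+((k+1 : ℕ) : ℝ))^(k+1) * n.factorial := by push_cast; ring

set_option maxHeartbeats 1000000 in
/-- Lemma 1 of the paper: for `λ ∈ (−1,0)`, `|c_n| ≤ 1`, and
`W_k(r) = ∑_n c_n K^λ_{n,n+k}(r)`, the function `r ↦ W_k(r) K^{1/λ}_{l,l+k}(r) r`
is integrable on `[0,∞)`, so is each `r ↦ K^λ_{n,n+k}(r) K^{1/λ}_{l,l+k}(r) r`, and
`∫_0^∞ W_k K^{1/λ}_{l,l+k} r dr = ∑_n c_n ∫_0^∞ K^λ_{n,n+k} K^{1/λ}_{l,l+k} r dr`. -/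
theorem stmt_8 (lam : ℝ) (hlam : lam ∈ Set.Ioo (-1 : ℝ) 0) (k l : ℕ)
    (c : ℕ → ℂ) (hc : ∀ n, ‖c n‖ ≤ 1)
    (W : ℝ → ℂ) (hW : ∀ r, W r = ∑' n : ℕ, c n * Kfun (lam : ℂ) n k r) :
    IntegrableOn (fun r : ℝ => W r * Kfun (1 / (lam : ℂ)) l k r * (r : ℂ)) (Set.Ioi 0) ∧
    (∀ n : ℕ, IntegrableOn
      (fun r : ℝ => Kfun (lam : ℂ) n k r * Kfun (1 / (lam : ℂ)) l k r * (r : ℂ)) (Set.Ioi 0)) ∧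
    HasSum
      (fun n : ℕ => c n * ∫ r in Set.Ioi (0 : ℝ),
        Kfun (lam : ℂ) n k r * Kfun (1 / (lam : ℂ)) l k r * (r : ℂ))
      (∫ r in Set.Ioi (0 : ℝ), W r * Kfun (1 / (lam : ℂ)) l k r * (r : ℂ)) := by
  obtain ⟨hlam1, hlam0⟩ := hlam
  set a : ℝ := -lam with ha_def
  have ha : 0 < a := by rw [ha_def]; linarith
  have ha1 : a < 1 := by rw [ha_def]; linarith
  have hb : 0 < a⁻¹ := inv_pos.2 ha
  have heqa : (lam : ℂ) = ((-a : ℝ) : ℂ) := by rw [ha_def]; push_cast; ring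
  have heqb : 1/(lam : ℂ) = ((-(a⁻¹) : ℝ) : ℂ) := by
    rw [heqa]
    have hne : ((-a : ℝ) : ℂ) ≠ 0 := by
      simp only [ne_eq, Complex.ofReal_eq_zero]
      intro h; linarith
    rw [eq_comm, eq_div_iff hne]
    push_cast
    field_simp
    exact div_self (Complex.ofReal_ne_zero.mpr ha.ne')
  set cc : ℝ := (1+a)^2/a with hcc_def
  have hccpos : 0 < cc := by rw [hcc_def]; positivity
  have hccb : (1+a⁻¹)^2/a⁻¹ = cc := by
    rw [hcc_def]; field_simp; ring
  -- the norm identity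
  have hnorm : ∀ (n : ℕ) (r : ℝ), 0 ≤ r →
      ‖Kfun (lam:ℂ) n k r * Kfun (1/(lam:ℂ)) l k r * (r:ℂ)‖
      = (Real.sqrt (n.factorial / (n+k).factorial)
          * Real.sqrt (l.factorial / (l+k).factorial))
        * ((1+a)^(k+1) * (1+a⁻¹)^(k+1) * (a⁻¹)^l) * a^n
        * (Real.exp (-cc*r^2) * r^(2*k+1)
            * (|Lag n k (cc*r^2)| * |Lag l k (cc*r^2)|)) := by
    intro n r hr
    rw [norm_mul, norm_mul, heqb, heqa, norm_Kfun a ha n k r hr, norm_Kfun a⁻¹ hb l k r hr,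
      Complex.norm_real, Real.norm_eq_abs, abs_of_nonneg hr]
    have hexp : Real.exp (-(1+a)*r^2) * Real.exp (-(1+a⁻¹)*r^2) = Real.exp (-cc*r^2) := by
      rw [← Real.exp_add]; congr 1; rw [hcc_def]; field_simp; ring
    have harg1 : (1+a)^2/a * r^2 = cc*r^2 := by rw [hcc_def]
    have harg2 : (1+a⁻¹)^2/a⁻¹ * r^2 = cc*r^2 := by rw [hccb]
    have hrp : r^k * r^k * r = r^(2*k+1) := by
      rw [← pow_add, ← pow_succ]; congr 1; omega
    rw [harg1, harg2, ← hexp, ← hrp]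
    ring
  -- the dominating bound
  set D : ℝ := (1+a)^(k+1) * (1+a⁻¹)^(k+1) * (a⁻¹)^l with hD_def
  have hDpos : 0 < D := by rw [hD_def]; positivity
  have hsqrt_le_one : ∀ m : ℕ, Real.sqrt (m.factorial / (m+k).factorial) ≤ 1 := by
    intro m
    rw [Real.sqrt_le_one]
    rw [div_le_one (by positivity)]
    exact_mod_cast Nat.factorial_le (by omega)
  have habs2 : ∀ x y : ℝ, |x| * |y| ≤ x^2 + y^2 := by
    intro x y
    nlinarith [sq_nonneg (|x| - |y|), sq_abs x, sq_abs y, abs_nonneg x, abs_nonneg y]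
  have hEnb : ∀ (n : ℕ) (r : ℝ), 0 ≤ r →
      ‖Kfun (lam:ℂ) n k r * Kfun (1/(lam:ℂ)) l k r * (r:ℂ)‖
      ≤ D * a^n * ((Real.exp (-cc*r^2) * r^(2*k+1) * (Lag n k (cc*r^2))^2)
          + (Real.exp (-cc*r^2) * r^(2*k+1) * (Lag l k (cc*r^2))^2)) := by
    intro n r hr
    rw [hnorm n r hr]
    have hE : (0:ℝ) ≤ Real.exp (-cc*r^2) * r^(2*k+1) := by positivity
    have hS : Real.sqrt (n.factorial / (n+k).factorial)
        * Real.sqrt (l.factorial / (l+k).factorial) ≤ 1 :=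
      mul_le_one₀ (hsqrt_le_one n) (Real.sqrt_nonneg _) (hsqrt_le_one l)
    calc (Real.sqrt (n.factorial / (n+k).factorial)
          * Real.sqrt (l.factorial / (l+k).factorial))
        * ((1+a)^(k+1) * (1+a⁻¹)^(k+1) * (a⁻¹)^l) * a^n
        * (Real.exp (-cc*r^2) * r^(2*k+1)
            * (|Lag n k (cc*r^2)| * |Lag l k (cc*r^2)|))
        ≤ 1 * ((1+a)^(k+1) * (1+a⁻¹)^(k+1) * (a⁻¹)^l) * a^n
          * (Real.exp (-cc*r^2) * r^(2*k+1)
            * ((Lag n k (cc*r^2))^2 + (Lag l k (cc*r^2))^2)) := by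
          have h1 := mul_le_mul_of_nonneg_left (habs2 (Lag n k (cc*r^2)) (Lag l k (cc*r^2))) hE
          have h2 : (0:ℝ) ≤ Real.exp (-cc*r^2) * r^(2*k+1)
              * (|Lag n k (cc*r^2)| * |Lag l k (cc*r^2)|) := by positivity
          have h3 : (0:ℝ) ≤ ((1+a)^(k+1) * (1+a⁻¹)^(k+1) * (a⁻¹)^l) * a^n := by positivity
          nlinarith [mul_le_mul_of_nonneg_left h1 h3,
            mul_le_mul_of_nonneg_right hS (mul_nonneg h3 h2)]
      _ = D * a^n * ((Real.exp (-cc*r^2) * r^(2*k+1) * (Lag n k (cc*r^2))^2)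
          + (Real.exp (-cc*r^2) * r^(2*k+1) * (Lag l k (cc*r^2))^2)) := by
          rw [hD_def]; ring
  -- continuity
  have hcontK : ∀ (lx : ℂ) (m : ℕ), Continuous fun r : ℝ => Kfun lx m k r := by
    intro lx m
    unfold Kfun
    apply Continuous.mul
    apply Continuous.mul
    apply Continuous.mul
    · exact continuous_const
    · exact (continuous_const.mul (Complex.continuous_ofReal.pow 2)).cexp
    · exact Complex.continuous_ofReal.pow k
    · exact continuous_finset_sum _ fun u _ =>
        continuous_const.mul (Complex.continuous_ofReal.pow (2*u))
  have hcont0 : ∀ n : ℕ, Continuous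
      (fun r : ℝ => Kfun (lam:ℂ) n k r * Kfun (1/(lam:ℂ)) l k r * (r:ℂ)) := fun n =>
    ((hcontK _ n).mul (hcontK _ l)).mul Complex.continuous_ofReal
  -- part 2 : integrability of each product
  have hgInt : ∀ n : ℕ, IntegrableOn (fun r : ℝ => D * a^n
      * ((Real.exp (-cc*r^2) * r^(2*k+1) * (Lag n k (cc*r^2))^2)
        + (Real.exp (-cc*r^2) * r^(2*k+1) * (Lag l k (cc*r^2))^2))) (Set.Ioi 0) := fun n =>
    ((intOn_En k n hccpos).add (intOn_En k l hccpos)).const_mul _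
  have part2 : ∀ n : ℕ, IntegrableOn
      (fun r : ℝ => Kfun (lam : ℂ) n k r * Kfun (1 / (lam : ℂ)) l k r * (r : ℂ))
      (Set.Ioi 0) := by
    intro n
    refine Integrable.mono' (hgInt n) ((hcont0 n).aestronglyMeasurable) ?_
    filter_upwards [ae_restrict_mem measurableSet_Ioi] with r hr
    exact hEnb n r (le_of_lt hr)
  -- integral norm bound
  set Cl : ℝ := ((l+k).factorial : ℝ) / l.factorial with hCl_def
  have hClpos : 0 < Cl := by
    rw [hCl_def]
    positivity
  have hIntNorm : ∀ n : ℕ,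
      (∫ r in Set.Ioi (0:ℝ), ‖Kfun (lam:ℂ) n k r * Kfun (1/(lam:ℂ)) l k r * (r:ℂ)‖)
      ≤ D * a^n * ((((n+k).factorial : ℝ)/n.factorial + Cl) / (2*cc^(k+1))) := by
    intro n
    have hmono := integral_mono_ae (part2 n).norm (hgInt n)
      (by filter_upwards [ae_restrict_mem measurableSet_Ioi] with r hr
          exact hEnb n r (le_of_lt hr))
    refine hmono.trans (le_of_eq ?_)
    rw [integral_const_mul, integral_add (intOn_En k n hccpos) (intOn_En k l hccpos),
      val_En k n hccpos, val_En k l hccpos, hCl_def]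
    ring
  -- summability of the integral norms
  have hSum : Summable (fun n : ℕ => ∫ r in Set.Ioi (0:ℝ),
      ‖c n * (Kfun (lam:ℂ) n k r * Kfun (1/(lam:ℂ)) l k r * (r:ℂ))‖) := by
    have hmaj : Summable (fun n : ℕ =>
        (D/(2*cc^(k+1))) * (((n:ℝ)+k)^k * a^n) + (D*Cl/(2*cc^(k+1))) * a^n) :=
      ((summable_shift a ha.le ha1 k).mul_left _).add
        ((summable_geometric_of_lt_one ha.le ha1).mul_left _)
    refine Summable.of_nonneg_of_le
      (fun n => integral_nonneg fun r => norm_nonneg _) (fun n => ?_) hmaj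
    have h1 : (∫ r in Set.Ioi (0:ℝ),
        ‖c n * (Kfun (lam:ℂ) n k r * Kfun (1/(lam:ℂ)) l k r * (r:ℂ))‖)
        = ‖c n‖ * ∫ r in Set.Ioi (0:ℝ),
            ‖Kfun (lam:ℂ) n k r * Kfun (1/(lam:ℂ)) l k r * (r:ℂ)‖ := by
      simp_rw [norm_mul]
      rw [integral_const_mul]
    have hXn : (((n+k).factorial : ℝ))/n.factorial ≤ ((n:ℝ)+k)^k := by
      rw [div_le_iff₀ (by positivity)]
      exact fact_ratio n k
    have hcn : ‖c n‖ ≤ 1 := by exact hc n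
    calc (∫ r in Set.Ioi (0:ℝ),
        ‖c n * (Kfun (lam:ℂ) n k r * Kfun (1/(lam:ℂ)) l k r * (r:ℂ))‖)
        = ‖c n‖ * ∫ r in Set.Ioi (0:ℝ),
            ‖Kfun (lam:ℂ) n k r * Kfun (1/(lam:ℂ)) l k r * (r:ℂ)‖ := h1
      _ ≤ 1 * ∫ r in Set.Ioi (0:ℝ),
            ‖Kfun (lam:ℂ) n k r * Kfun (1/(lam:ℂ)) l k r * (r:ℂ)‖ :=
          mul_le_mul_of_nonneg_right hcn (integral_nonneg fun r => norm_nonneg _)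
      _ = ∫ r in Set.Ioi (0:ℝ),
            ‖Kfun (lam:ℂ) n k r * Kfun (1/(lam:ℂ)) l k r * (r:ℂ)‖ := one_mul _
      _ ≤ D * a^n * ((((n+k).factorial : ℝ)/n.factorial + Cl) / (2*cc^(k+1))) := hIntNorm n
      _ = (D/(2*cc^(k+1))) * ((((n+k).factorial : ℝ)/n.factorial) * a^n)
            + (D*Cl/(2*cc^(k+1))) * a^n := by ring
      _ ≤ (D/(2*cc^(k+1))) * (((n:ℝ)+k)^k * a^n) + (D*Cl/(2*cc^(k+1))) * a^n := by
          have := mul_le_mul_of_nonneg_right hXn (pow_nonneg ha.le n)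
          have h2 : (0:ℝ) ≤ D/(2*cc^(k+1)) := by positivity
          nlinarith [mul_le_mul_of_nonneg_left this h2]
  -- F n integrable
  have hFint : ∀ n : ℕ, Integrable
      (fun r : ℝ => c n * (Kfun (lam:ℂ) n k r * Kfun (1/(lam:ℂ)) l k r * (r:ℂ)))
      (volume.restrict (Set.Ioi 0)) := fun n => (part2 n).const_mul (c n)
  -- pointwise equality of the tsum
  have heq : ∀ r : ℝ,
      (∑' n : ℕ, c n * (Kfun (lam:ℂ) n k r * Kfun (1/(lam:ℂ)) l k r * (r:ℂ)))
      = W r * Kfun (1/(lam:ℂ)) l k r * (r:ℂ) := by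
    intro r
    have h1 : ∀ n : ℕ, c n * (Kfun (lam:ℂ) n k r * Kfun (1/(lam:ℂ)) l k r * (r:ℂ))
        = (c n * Kfun (lam:ℂ) n k r) * (Kfun (1/(lam:ℂ)) l k r * (r:ℂ)) := fun n => by ring
    rw [tsum_congr h1, tsum_mul_right, ← hW r]
    ring
  -- pointwise summability of the norms
  have hSnorm : ∀ r : ℝ, 0 ≤ r → Summable (fun n : ℕ =>
      ‖c n * (Kfun (lam:ℂ) n k r * Kfun (1/(lam:ℂ)) l k r * (r:ℂ))‖) := by
    intro r hr
    have hx : (0:ℝ) ≤ cc*r^2 := by positivity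
    have hmaj : Summable (fun n : ℕ =>
        (D * (Real.exp (-cc*r^2) * r^(2*k+1) * |Lag l k (cc*r^2)|))
          * (a^n * |Lag n k (cc*r^2)|)) :=
      (summable_aLag k ha ha1 hx).mul_left _
    refine Summable.of_nonneg_of_le (fun n => norm_nonneg _) (fun n => ?_) hmaj
    rw [norm_mul, hnorm n r hr]
    have hcn : ‖c n‖ ≤ 1 := by exact hc n
    have hS : Real.sqrt (n.factorial / (n+k).factorial)
        * Real.sqrt (l.factorial / (l+k).factorial) ≤ 1 :=
      mul_le_one₀ (hsqrt_le_one n) (Real.sqrt_nonneg _) (hsqrt_le_one l)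
    have hrest : (0:ℝ) ≤ ((1+a)^(k+1) * (1+a⁻¹)^(k+1) * (a⁻¹)^l) * a^n
        * (Real.exp (-cc*r^2) * r^(2*k+1)
            * (|Lag n k (cc*r^2)| * |Lag l k (cc*r^2)|)) := by positivity
    have hY2 : (0:ℝ) ≤ ((1+a)^(k+1) * (1+a⁻¹)^(k+1) * (a⁻¹)^l) * a^n
        * (Real.exp (-cc*r^2) * r^(2*k+1)
            * (|Lag n k (cc*r^2)| * |Lag l k (cc*r^2)|)) := by positivity
    calc ‖c n‖ * ((Real.sqrt (n.factorial / (n+k).factorial)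
          * Real.sqrt (l.factorial / (l+k).factorial))
        * ((1+a)^(k+1) * (1+a⁻¹)^(k+1) * (a⁻¹)^l) * a^n
        * (Real.exp (-cc*r^2) * r^(2*k+1)
            * (|Lag n k (cc*r^2)| * |Lag l k (cc*r^2)|)))
        ≤ 1 * (((1+a)^(k+1) * (1+a⁻¹)^(k+1) * (a⁻¹)^l) * a^n
          * (Real.exp (-cc*r^2) * r^(2*k+1)
            * (|Lag n k (cc*r^2)| * |Lag l k (cc*r^2)|))) := by
          refine mul_le_mul hcn ?_ (by positivity) (by norm_num)
          nlinarith [mul_le_mul_of_nonneg_right hS hY2, hY2]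
      _ = (D * (Real.exp (-cc*r^2) * r^(2*k+1) * |Lag l k (cc*r^2)|))
          * (a^n * |Lag n k (cc*r^2)|) := by rw [hD_def]; ring
  -- part 3
  have h3 := MeasureTheory.hasSum_integral_of_summable_integral_norm
    (μ := volume.restrict (Set.Ioi 0))
    (F := fun n r => c n * (Kfun (lam:ℂ) n k r * Kfun (1/(lam:ℂ)) l k r * (r:ℂ)))
    hFint hSum
  have part3 : HasSum
      (fun n : ℕ => c n * ∫ r in Set.Ioi (0 : ℝ),
        Kfun (lam : ℂ) n k r * Kfun (1 / (lam : ℂ)) l k r * (r : ℂ))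
      (∫ r in Set.Ioi (0 : ℝ), W r * Kfun (1 / (lam : ℂ)) l k r * (r : ℂ)) := by
    convert h3 using 1
    · rfl
    · funext n
      exact (integral_const_mul (c n) _).symm
    · refine setIntegral_congr_fun measurableSet_Ioi (fun r _ => ?_)
      exact (heq r).symm
  -- part 1
  have part1 : IntegrableOn
      (fun r : ℝ => W r * Kfun (1 / (lam : ℂ)) l k r * (r : ℂ)) (Set.Ioi 0) := by
    constructor
    · apply aestronglyMeasurable_of_tendsto_ae (u := atTop)
        (f := fun N r => ∑ n ∈ Finset.range N,
          c n * (Kfun (lam:ℂ) n k r * Kfun (1/(lam:ℂ)) l k r * (r:ℂ)))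
      · intro N
        exact (continuous_finset_sum _ fun n _ =>
          continuous_const.mul (hcont0 n)).aestronglyMeasurable
      · filter_upwards [ae_restrict_mem measurableSet_Ioi] with r hr
        have hsm : Summable (fun n : ℕ =>
            c n * (Kfun (lam:ℂ) n k r * Kfun (1/(lam:ℂ)) l k r * (r:ℂ))) :=
          Summable.of_norm (hSnorm r (le_of_lt hr))
        have ht := hsm.hasSum.tendsto_sum_nat
        rw [heq r] at ht
        exact ht
    · show HasFiniteIntegral _ _
      have hb1 : ∀ᵐ r ∂(volume.restrict (Set.Ioi (0:ℝ))),
          (‖W r * Kfun (1/(lam:ℂ)) l k r * (r:ℂ)‖₊ : ENNReal)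
          ≤ ∑' n : ℕ, (‖c n * (Kfun (lam:ℂ) n k r * Kfun (1/(lam:ℂ)) l k r * (r:ℂ))‖₊
              : ENNReal) := by
        filter_upwards [ae_restrict_mem measurableSet_Ioi] with r hr
        have hSn := hSnorm r (le_of_lt hr)
        calc (‖W r * Kfun (1/(lam:ℂ)) l k r * (r:ℂ)‖₊ : ENNReal)
            = ENNReal.ofReal ‖W r * Kfun (1/(lam:ℂ)) l k r * (r:ℂ)‖ :=
              (ofReal_norm _).symm
          _ ≤ ENNReal.ofReal (∑' n : ℕ,
              ‖c n * (Kfun (lam:ℂ) n k r * Kfun (1/(lam:ℂ)) l k r * (r:ℂ))‖) := by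
              refine ENNReal.ofReal_le_ofReal ?_
              rw [← heq r]
              exact norm_tsum_le_tsum_norm hSn
          _ = ∑' n : ℕ, ENNReal.ofReal
              ‖c n * (Kfun (lam:ℂ) n k r * Kfun (1/(lam:ℂ)) l k r * (r:ℂ))‖ :=
              ENNReal.ofReal_tsum_of_nonneg (fun n => norm_nonneg _) hSn
          _ = ∑' n : ℕ, (‖c n * (Kfun (lam:ℂ) n k r * Kfun (1/(lam:ℂ)) l k r * (r:ℂ))‖₊
              : ENNReal) := tsum_congr fun n => ofReal_norm _
      calc ∫⁻ r, ‖W r * Kfun (1/(lam:ℂ)) l k r * (r:ℂ)‖₊ ∂(volume.restrict (Set.Ioi 0))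
          ≤ ∫⁻ r, ∑' n : ℕ,
              (‖c n * (Kfun (lam:ℂ) n k r * Kfun (1/(lam:ℂ)) l k r * (r:ℂ))‖₊ : ENNReal)
              ∂(volume.restrict (Set.Ioi 0)) := lintegral_mono_ae hb1
        _ = ∑' n : ℕ, ∫⁻ r,
              (‖c n * (Kfun (lam:ℂ) n k r * Kfun (1/(lam:ℂ)) l k r * (r:ℂ))‖₊ : ENNReal)
              ∂(volume.restrict (Set.Ioi 0)) :=
            lintegral_tsum fun n => (hFint n).1.enorm
        _ = ∑' n : ℕ, ENNReal.ofReal (∫ r in Set.Ioi (0:ℝ),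
              ‖c n * (Kfun (lam:ℂ) n k r * Kfun (1/(lam:ℂ)) l k r * (r:ℂ))‖) :=
            tsum_congr fun n => (ofReal_integral_norm_eq_lintegral_enorm (hFint n)).symm
        _ = ENNReal.ofReal (∑' n : ℕ, ∫ r in Set.Ioi (0:ℝ),
              ‖c n * (Kfun (lam:ℂ) n k r * Kfun (1/(lam:ℂ)) l k r * (r:ℂ))‖) :=
            (ENNReal.ofReal_tsum_of_nonneg
              (fun n => integral_nonneg fun r => norm_nonneg _) hSum).symm
        _ < ⊤ := ENNReal.ofReal_lt_top
  exact ⟨part1, part2, part3⟩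
end

section
/- Let λ ∈ ℂ with |λ| < 1, let k ∈ ℕ, and let (c_n)_{n∈ℕ} be a sequence of complex numbers with |c_n| ≤ 1 for all n. Then there exists ε > 0 such that for every l ∈ ℕ the series of functions ∑_{n=0}^∞ c_n·(d^l/dr^l)[e^{(1−λ)r²}·K^λ_{n,n+k}(r)] converges uniformly on [0, ε) (i.e., the partial sums converge uniformly on [0, ε)). -/
open MeasureTheory Filter

lemma iterDeriv_monomial_sum (F : Finset ℕ) (A : ℕ → ℂ) (m : ℕ → ℕ) (l : ℕ) :
    iteratedDeriv l (fun s : ℝ => ∑ u ∈ F, A u * (s : ℂ) ^ (m u)) =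
      fun r : ℝ => ∑ u ∈ F, A u * ((m u).descFactorial l : ℂ) * (r : ℂ) ^ (m u - l) := by
  induction l with
  | zero => simp
  | succ l ih =>
    rw [iteratedDeriv_succ, ih]
    funext x
    have h : HasDerivAt
        (fun r : ℝ => ∑ u ∈ F, A u * ((m u).descFactorial l : ℂ) * (r : ℂ) ^ (m u - l))
        (∑ u ∈ F, A u * ((m u).descFactorial (l + 1) : ℂ) * (x : ℂ) ^ (m u - (l + 1))) x := by
      refine HasDerivAt.fun_sum fun u _ => ?_
      have h1 : HasDerivAt
          (fun r : ℝ => A u * ((m u).descFactorial l : ℂ) * (r : ℂ) ^ (m u - l))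
          (A u * ((m u).descFactorial l : ℂ) * (((m u - l : ℕ) : ℂ) * (x : ℂ) ^ (m u - l - 1))) x :=
        ((hasDerivAt_pow (m u - l) ((x : ℂ))).const_mul
          (A u * ((m u).descFactorial l : ℂ))).comp_ofReal
      refine h1.congr_deriv ?_
      rw [Nat.descFactorial_succ]
      have : m u - (l + 1) = m u - l - 1 := by omega
      rw [this]
      push_cast
      ring
    exact h.deriv

set_option maxHeartbeats 1000000 in
/-- Lemma 3 of the paper: for `|λ| < 1` and `|c_n| ≤ 1`, there is `ε > 0` such that for
every `l` the series `∑_n c_n (d^l/dr^l)[e^{(1−λ)r²} K^λ_{n,n+k}(r)]` converges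
uniformly on `[0, ε)`. -/
theorem stmt_11 (lam : ℂ) (hlam : ‖lam‖ < 1) (k : ℕ)
    (c : ℕ → ℂ) (hc : ∀ n, ‖c n‖ ≤ 1) :
    ∃ ε > (0 : ℝ), ∀ l : ℕ, ∃ g : ℝ → ℂ,
      TendstoUniformlyOn
        (fun N r => ∑ n ∈ Finset.range N,
          c n * iteratedDeriv l (fun s : ℝ => Complex.exp ((1 - lam) * (s : ℂ) ^ 2) * Kfun lam n k s) r)
        g atTop (Set.Ico (0 : ℝ) ε) := by
  have habs : 0 ≤ ‖lam‖ := norm_nonneg _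
  set b : ℝ := ‖1 - lam‖ with hbdef
  have hb0 : 0 ≤ b := norm_nonneg _
  set t : ℝ := (1 + ‖lam‖) / 2 with htdef
  have ht0 : 0 < t := by rw [htdef]; linarith
  have ht1 : t < 1 := by rw [htdef]; linarith
  have hlt : ‖lam‖ ≤ t := by rw [htdef]; linarith
  set s0 : ℝ := Real.sqrt t with hs0def
  have hs00 : 0 < s0 := Real.sqrt_pos.2 ht0
  have hs01 : s0 < 1 := by
    rw [hs0def, show (1 : ℝ) = Real.sqrt 1 by simp]
    exact Real.sqrt_lt_sqrt ht0.le ht1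
  have hs0sq : s0 ^ 2 = t := Real.sq_sqrt ht0.le
  set x0 : ℝ := Real.log s0⁻¹ with hx0def
  have hx0 : 0 < x0 := Real.log_pos ((one_lt_inv₀ hs00).2 hs01)
  set ε : ℝ := min 1 (Real.sqrt (t * x0) / (b + 1)) with hεdef
  have hε0 : 0 < ε := lt_min one_pos (by positivity)
  have hε1 : ε ≤ 1 := min_le_left _ _
  have hεb : (b * ε) ^ 2 / t ≤ x0 := by
    have h2 : ε ≤ Real.sqrt (t * x0) / (b + 1) := min_le_right _ _
    have h1 : b * ε ≤ Real.sqrt (t * x0) := by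
      calc b * ε ≤ b * (Real.sqrt (t * x0) / (b + 1)) := by
            exact mul_le_mul_of_nonneg_left h2 hb0
        _ = Real.sqrt (t * x0) * (b / (b + 1)) := by ring
        _ ≤ Real.sqrt (t * x0) * 1 := by
            apply mul_le_mul_of_nonneg_left _ (Real.sqrt_nonneg _)
            rw [div_le_one (by linarith)]; linarith
        _ = Real.sqrt (t * x0) := mul_one _
    have h3 : (b * ε) ^ 2 ≤ t * x0 := by
      calc (b * ε) ^ 2 ≤ Real.sqrt (t * x0) ^ 2 := by
            apply pow_le_pow_left₀ (by positivity) h1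
        _ = t * x0 := Real.sq_sqrt (by positivity)
    rw [div_le_iff₀ ht0]
    linarith
  have hexp : Real.exp ((b * ε) ^ 2 / t) ≤ s0⁻¹ := by
    calc Real.exp ((b * ε) ^ 2 / t) ≤ Real.exp x0 := Real.exp_le_exp.2 hεb
      _ = s0⁻¹ := by rw [hx0def, Real.exp_log (by positivity)]
  refine ⟨ε, hε0, fun l => ?_⟩
  set q : ℕ → ℝ := fun n =>
    (((k : ℝ) + 2) ^ (l + k) * b ^ (k + 1) * (ε⁻¹) ^ l * (s0⁻¹) ^ k) *
      (((n : ℝ) + 1) ^ (l + k) * s0 ^ n) with hqdef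
  have hqsum : Summable q := by
    have h1 : Summable (fun n : ℕ => (n : ℝ) ^ (l + k) * s0 ^ n) :=
      summable_pow_mul_geometric_of_norm_lt_one (l + k)
        (by rw [Real.norm_eq_abs, abs_of_nonneg hs00.le]; exact hs01)
    have h2 : Summable (fun n : ℕ => ((n + 1 : ℕ) : ℝ) ^ (l + k) * s0 ^ (n + 1)) :=
      (summable_nat_add_iff (f := fun n : ℕ => (n : ℝ) ^ (l + k) * s0 ^ n) 1).2 h1
    have h4 : Summable (fun n : ℕ => ((n : ℝ) + 1) ^ (l + k) * s0 ^ n) := by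
      refine (h2.mul_left s0⁻¹).congr fun n => ?_
      push_cast
      rw [pow_succ]
      rw [show s0⁻¹ * (((n : ℝ) + 1) ^ (l + k) * (s0 ^ n * s0))
          = ((n : ℝ) + 1) ^ (l + k) * s0 ^ n * (s0⁻¹ * s0) by ring,
        inv_mul_cancel₀ hs00.ne', mul_one]
    exact h4.mul_left _
  refine ⟨fun r => ∑' n, c n * iteratedDeriv l
      (fun s : ℝ => Complex.exp ((1 - lam) * (s : ℂ) ^ 2) * Kfun lam n k s) r, ?_⟩
  apply tendstoUniformlyOn_tsum_nat hqsum
  rintro n r ⟨hr0, hrε⟩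
  set B : ℕ → ℂ := fun u =>
    ((Real.sqrt ((n.factorial : ℝ) / ((n + k).factorial : ℝ)) : ℝ) : ℂ) * (1 - lam) ^ (k + 1) *
      ((lam ^ (n - u) / (u.factorial : ℂ)) * (((n + k).choose (n - u) : ℕ) : ℂ) *
        (1 - lam) ^ (2 * u)) with hBdef
  have hfun : (fun s : ℝ => Complex.exp ((1 - lam) * (s : ℂ) ^ 2) * Kfun lam n k s)
      = fun s : ℝ => ∑ u ∈ Finset.range (n + 1), B u * (s : ℂ) ^ (2 * u + k) := by
    funext s
    rw [Kfun, neg_mul, Complex.exp_neg]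
    rw [Finset.mul_sum, Finset.mul_sum]
    refine Finset.sum_congr rfl fun u _ => ?_
    have hcan : Complex.exp ((1 - lam) * (s : ℂ) ^ 2) *
        (Complex.exp ((1 - lam) * (s : ℂ) ^ 2))⁻¹ = 1 :=
      mul_inv_cancel₀ (Complex.exp_ne_zero _)
    rw [hBdef, pow_add]
    linear_combination (((Real.sqrt ((n.factorial : ℝ) / ((n + k).factorial : ℝ)) : ℝ) : ℂ) *
      (1 - lam) ^ (k + 1) * (lam ^ (n - u) / (u.factorial : ℂ) *
      (((n + k).choose (n - u) : ℕ) : ℂ) * (1 - lam) ^ (2 * u)) *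
      (s : ℂ) ^ (2 * u) * (s : ℂ) ^ k) * hcan
  rw [hfun, iterDeriv_monomial_sum (Finset.range (n + 1)) B (fun u => 2 * u + k) l]
  set P : ℝ := ((n + k : ℕ) : ℝ) with hPdef
  have hP0 : 0 ≤ P := Nat.cast_nonneg _
  set y : ℝ := ((n + k : ℕ) : ℝ) * ((b * ε) ^ 2 / t) with hydef
  have hy0 : 0 ≤ y := by
    rw [hydef]
    exact mul_nonneg (Nat.cast_nonneg _) (div_nonneg (sq_nonneg _) ht0.le)
  set Cl : ℝ := b ^ (k + 1) * (2 * (n : ℝ) + k) ^ l * (ε⁻¹) ^ l * P ^ k with hCldef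
  have hCl0 : 0 ≤ Cl := by
    rw [hCldef]
    exact mul_nonneg (mul_nonneg (mul_nonneg (pow_nonneg hb0 _) (by positivity))
      (by positivity)) (pow_nonneg hP0 _)
  have hterm : ∀ u ∈ Finset.range (n + 1),
      ‖B u * (((2 * u + k).descFactorial l : ℕ) : ℂ) * (r : ℂ) ^ (2 * u + k - l)‖
        ≤ Cl * (t ^ n * (y ^ u / ((u.factorial : ℝ) * (u.factorial : ℝ)))) := by
    intro u hu
    have hun : u ≤ n := Nat.lt_succ_iff.1 (Finset.mem_range.1 hu)
    have hnorm : ‖B u * (((2 * u + k).descFactorial l : ℕ) : ℂ) * (r : ℂ) ^ (2 * u + k - l)‖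
        = Real.sqrt ((n.factorial : ℝ) / ((n + k).factorial : ℝ)) * b ^ (k + 1) *
          (‖lam‖ ^ (n - u) / (u.factorial : ℝ) * (((n + k).choose (n - u) : ℕ) : ℝ)
            * b ^ (2 * u)) * (((2 * u + k).descFactorial l : ℕ) : ℝ) * r ^ (2 * u + k - l) := by
      simp only [hBdef, norm_mul, norm_pow, norm_div, Complex.norm_real, Complex.norm_natCast,
        Real.norm_eq_abs, abs_of_nonneg (Real.sqrt_nonneg _),
        abs_of_nonneg hr0, ← hbdef]
    have f1 : Real.sqrt ((n.factorial : ℝ) / ((n + k).factorial : ℝ)) ≤ 1 := by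
      rw [show (1:ℝ) = Real.sqrt 1 by simp]
      apply Real.sqrt_le_sqrt
      rw [div_le_one (by positivity)]
      exact_mod_cast Nat.factorial_le (Nat.le_add_right n k)
    have f2 : ‖lam‖ ^ (n - u) ≤ t ^ (n - u) := pow_le_pow_left₀ habs hlt _
    have f3 : (((n + k).choose (n - u) : ℕ) : ℝ) ≤ P ^ (k + u) / (u.factorial : ℝ) := by
      have e1 : (n + k).choose (n - u) = (n + k).choose (k + u) :=
        Nat.choose_symm_of_eq_add (by omega)
      have e2 : (((n + k).choose (k + u) : ℕ) : ℝ) ≤ P ^ (k + u) / ((k + u).factorial : ℝ) := by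
        have h := Nat.choose_le_pow_div (α := ℝ) (k + u) (n + k)
        rw [hPdef]
        exact_mod_cast h
      calc (((n + k).choose (n - u) : ℕ) : ℝ) = (((n + k).choose (k + u) : ℕ) : ℝ) := by rw [e1]
        _ ≤ P ^ (k + u) / ((k + u).factorial : ℝ) := e2
        _ ≤ P ^ (k + u) / (u.factorial : ℝ) := by
            apply div_le_div_of_nonneg_left (pow_nonneg hP0 _)
              (by exact_mod_cast u.factorial_pos)
            exact_mod_cast Nat.factorial_le (Nat.le_add_left u k)
    have f4 : (((2 * u + k).descFactorial l : ℕ) : ℝ) ≤ (2 * (n : ℝ) + k) ^ l := by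
      have h : (2 * u + k).descFactorial l ≤ (2 * n + k) ^ l :=
        le_trans (Nat.descFactorial_le_pow _ _) (Nat.pow_le_pow_left (by omega) l)
      calc (((2 * u + k).descFactorial l : ℕ) : ℝ) ≤ (((2 * n + k) ^ l : ℕ) : ℝ) := by
            exact_mod_cast h
        _ = (2 * (n : ℝ) + k) ^ l := by push_cast; ring
    have f5 : r ^ (2 * u + k - l) ≤ ε ^ (2 * u) * (ε⁻¹) ^ l := by
      have h1 : r ^ (2 * u + k - l) ≤ ε ^ (2 * u + k - l) := pow_le_pow_left₀ hr0 hrε.le _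
      have h2 : ε ^ (2 * u + k - l) * ε ^ l ≤ ε ^ (2 * u) := by
        rw [← pow_add]
        exact pow_le_pow_of_le_one hε0.le hε1 (by omega)
      calc r ^ (2 * u + k - l) ≤ ε ^ (2 * u + k - l) := h1
        _ = ε ^ (2 * u + k - l) * ε ^ l * (ε⁻¹) ^ l := by
            rw [mul_assoc, ← mul_pow, mul_inv_cancel₀ hε0.ne', one_pow, mul_one]
        _ ≤ ε ^ (2 * u) * (ε⁻¹) ^ l :=
            mul_le_mul_of_nonneg_right h2 (by positivity)
    have htn : t ^ (n - u) = t ^ n / t ^ u := by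
      rw [eq_div_iff (pow_ne_zero _ ht0.ne'), ← pow_add]
      congr 1
      omega
    calc ‖B u * (((2 * u + k).descFactorial l : ℕ) : ℂ) * (r : ℂ) ^ (2 * u + k - l)‖
        = Real.sqrt ((n.factorial : ℝ) / ((n + k).factorial : ℝ)) * b ^ (k + 1) *
          (‖lam‖ ^ (n - u) / (u.factorial : ℝ) * (((n + k).choose (n - u) : ℕ) : ℝ)
            * b ^ (2 * u)) * (((2 * u + k).descFactorial l : ℕ) : ℝ) * r ^ (2 * u + k - l) :=
          hnorm
      _ ≤ 1 * b ^ (k + 1) *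
          (t ^ (n - u) / (u.factorial : ℝ) * (P ^ (k + u) / (u.factorial : ℝ)) * b ^ (2 * u)) *
          ((2 * (n : ℝ) + k) ^ l) * (ε ^ (2 * u) * (ε⁻¹) ^ l) := by
          have hfact : (0:ℝ) < (u.factorial : ℝ) := by exact_mod_cast u.factorial_pos
          have hb2 : (0:ℝ) ≤ b ^ (2 * u) := pow_nonneg hb0 _
          have hb1 : (0:ℝ) ≤ b ^ (k + 1) := pow_nonneg hb0 _
          gcongr <;> first
            | exact div_nonneg (pow_nonneg habs _) hfact.le
            | exact Nat.cast_nonneg _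
            | positivity
      _ = Cl * (t ^ n * (y ^ u / ((u.factorial : ℝ) * (u.factorial : ℝ)))) := by
          have hfact : ((u.factorial : ℝ)) ≠ 0 := by
            exact_mod_cast u.factorial_ne_zero
          have htne : t ≠ 0 := ht0.ne'
          have htu : t ^ u * t⁻¹ ^ u = 1 := by rw [← mul_pow, mul_inv_cancel₀ htne, one_pow]
          rw [htn, hCldef, hydef, ← hPdef, mul_pow, div_pow, mul_pow, pow_add P]
          field_simp
          linear_combination (-(b * b ^ k * b ^ (u * 2) * P ^ k * P ^ u * ε ^ (u * 2) *
            ((n : ℝ) * 2 + k) ^ l)) * htu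
  calc ‖c n * ∑ u ∈ Finset.range (n + 1),
        B u * (((2 * u + k).descFactorial l : ℕ) : ℂ) * (r : ℂ) ^ (2 * u + k - l)‖
      = ‖c n‖ * ‖∑ u ∈ Finset.range (n + 1),
        B u * (((2 * u + k).descFactorial l : ℕ) : ℂ) * (r : ℂ) ^ (2 * u + k - l)‖ := by
        rw [norm_mul]
    _ ≤ 1 * (∑ u ∈ Finset.range (n + 1),
        Cl * (t ^ n * (y ^ u / ((u.factorial : ℝ) * (u.factorial : ℝ))))) := by
        apply mul_le_mul (hc n) _ (norm_nonneg _) zero_le_one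
        exact le_trans (norm_sum_le _ _) (Finset.sum_le_sum hterm)
    _ = Cl * (t ^ n * ∑ u ∈ Finset.range (n + 1),
        y ^ u / ((u.factorial : ℝ) * (u.factorial : ℝ))) := by
        rw [one_mul, ← Finset.mul_sum, ← Finset.mul_sum]
    _ ≤ Cl * (t ^ n * Real.exp y) := by
        apply mul_le_mul_of_nonneg_left _ hCl0
        apply mul_le_mul_of_nonneg_left _ (pow_nonneg ht0.le n)
        calc ∑ u ∈ Finset.range (n + 1), y ^ u / ((u.factorial : ℝ) * (u.factorial : ℝ))
            ≤ ∑ u ∈ Finset.range (n + 1), y ^ u / (u.factorial : ℝ) := by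
              refine Finset.sum_le_sum fun u _ => ?_
              apply div_le_div_of_nonneg_left (pow_nonneg hy0 u)
                (by exact_mod_cast u.factorial_pos)
              have h1 : (1:ℝ) ≤ (u.factorial : ℝ) := by exact_mod_cast u.factorial_pos
              nlinarith
          _ ≤ Real.exp y := Real.sum_le_exp_of_nonneg hy0 _
    _ ≤ Cl * (t ^ n * (s0⁻¹) ^ (n + k)) := by
        apply mul_le_mul_of_nonneg_left _ hCl0
        apply mul_le_mul_of_nonneg_left _ (pow_nonneg ht0.le n)
        rw [hydef, Real.exp_nat_mul]
        exact pow_le_pow_left₀ (Real.exp_pos _).le hexp _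
    _ ≤ q n := by
        have e1 : s0 * s0 * s0⁻¹ = s0 := by field_simp
        have hss : t ^ n * (s0⁻¹) ^ (n + k) = s0 ^ n * (s0⁻¹) ^ k := by
          calc t ^ n * (s0⁻¹) ^ (n + k) = (s0 * s0 * s0⁻¹) ^ n * (s0⁻¹) ^ k := by
                rw [← hs0sq, sq]; ring
            _ = s0 ^ n * (s0⁻¹) ^ k := by rw [e1]
        have hpoly : (2 * (n : ℝ) + k) ^ l * P ^ k
            ≤ ((k : ℝ) + 2) ^ (l + k) * ((n : ℝ) + 1) ^ (l + k) := by
          have hn0 : (0:ℝ) ≤ (n : ℝ) := Nat.cast_nonneg n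
          have hk0 : (0:ℝ) ≤ (k : ℝ) := Nat.cast_nonneg k
          have hc1 : 2 * (n : ℝ) + k ≤ ((k : ℝ) + 2) * ((n : ℝ) + 1) := by nlinarith
          have hc2 : P ≤ ((k : ℝ) + 2) * ((n : ℝ) + 1) := by
            rw [hPdef]; push_cast; nlinarith
          calc (2 * (n : ℝ) + k) ^ l * P ^ k
              ≤ (((k : ℝ) + 2) * ((n : ℝ) + 1)) ^ l * (((k : ℝ) + 2) * ((n : ℝ) + 1)) ^ k :=
                mul_le_mul (pow_le_pow_left₀ (by positivity) hc1 l)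
                  (pow_le_pow_left₀ hP0 hc2 k) (pow_nonneg hP0 k) (by positivity)
            _ = ((k : ℝ) + 2) ^ (l + k) * ((n : ℝ) + 1) ^ (l + k) := by
                rw [← pow_add, mul_pow]
        calc Cl * (t ^ n * (s0⁻¹) ^ (n + k))
            = (b ^ (k + 1) * (ε⁻¹) ^ l * (s0⁻¹) ^ k * s0 ^ n) *
              ((2 * (n : ℝ) + k) ^ l * P ^ k) := by
              rw [hss, hCldef]; ring
          _ ≤ (b ^ (k + 1) * (ε⁻¹) ^ l * (s0⁻¹) ^ k * s0 ^ n) *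
              (((k : ℝ) + 2) ^ (l + k) * ((n : ℝ) + 1) ^ (l + k)) := by
              apply mul_le_mul_of_nonneg_left hpoly
              exact mul_nonneg (mul_nonneg (mul_nonneg (pow_nonneg hb0 _) (by positivity))
                (by positivity)) (pow_nonneg hs00.le _)
          _ = q n := by simp only [hqdef]; ring
end

section
/- Let λ ∈ ℂ with 0 < |λ| < 1, let (c_n)_{n∈ℕ} be a sequence of complex numbers with |c_n| ≤ 1 for all n, and let h, j ∈ ℕ. Then the 2j-th derivative at r = 0 of the function r ↦ e^{(1−λ)r²}·∑_{n=0}^∞ c_n·K^λ_{n,n+2h}(r) exists and equals C(2j, j−h)·(1−λ)^{2j+1}·λ^{h−j}·∑_{n=max(0, j−h)}^∞ c_n·λ^n·√((n+2h)!·n!)/(n−j+h)!, where C(2j, j−h) denotes the binomial coefficient, interpreted as 0 when j < h, and the series on the right converges absolutely. -/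
open MeasureTheory Filter

namespace Stmt12

noncomputable def ee (lam : ℂ) (c : ℕ → ℂ) (h u n : ℕ) : ℂ :=
  if u ≤ n then
    c n * ((Real.sqrt ((n.factorial : ℝ) / ((n + 2 * h).factorial : ℝ)) : ℝ) : ℂ)
      * (1 - lam) ^ (2 * h + 1) * (lam ^ (n - u) / (u.factorial : ℂ))
      * (((n + 2 * h).choose (n - u) : ℕ) : ℂ) * (1 - lam) ^ (2 * u)
  else 0

lemma ee_of_gt {lam : ℂ} {c : ℕ → ℂ} {h u n : ℕ} (hun : ¬ u ≤ n) : ee lam c h u n = 0 :=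
  if_neg hun

lemma Kfun_expand (lam : ℂ) (c : ℕ → ℂ) (h n : ℕ) (r : ℝ) :
    c n * Kfun lam n (2 * h) r =
      Complex.exp (-(1 - lam) * (r : ℂ) ^ 2) *
        ∑ u ∈ Finset.range (n + 1), ee lam c h u n * (r : ℂ) ^ (2 * h + 2 * u) := by
  unfold Kfun
  rw [Finset.mul_sum, Finset.mul_sum]
  rw [Finset.mul_sum]
  refine Finset.sum_congr rfl fun u hu => ?_
  rw [ee, if_pos (Nat.lt_succ_iff.mp (Finset.mem_range.mp hu)), pow_add]
  ring

lemma F_eq (lam : ℂ) (c : ℕ → ℂ) (h : ℕ) (r : ℝ) :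
    Complex.exp ((1 - lam) * (r : ℂ) ^ 2) * ∑' n : ℕ, c n * Kfun lam n (2 * h) r =
      ∑' n : ℕ, ∑ u ∈ Finset.range (n + 1), ee lam c h u n * (r : ℂ) ^ (2 * h + 2 * u) := by
  rw [tsum_congr (fun n => Kfun_expand lam c h n r), tsum_mul_left, ← mul_assoc,
    ← Complex.exp_add, show (1 - lam) * (r:ℂ)^2 + -(1 - lam) * (r:ℂ)^2 = 0 by ring,
    Complex.exp_zero, one_mul]

lemma aux_pow_div_le (s X : ℝ) (hs : 0 < s) (hX : 0 ≤ X) (k : ℕ) :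
    X ^ k / (k.factorial : ℝ) ≤ Real.exp (s * X) / s ^ k := by
  rw [div_le_div_iff₀ (by positivity) (by positivity)]
  have h1 := Real.pow_div_factorial_le_exp (x := s * X) (by positivity) k
  rw [div_le_iff₀ (by positivity)] at h1
  calc X ^ k * s ^ k = (s * X) ^ k := by rw [mul_pow]; ring
    _ ≤ Real.exp (s * X) * (k.factorial : ℝ) := h1

noncomputable def rr (lam : ℂ) : ℝ := (1 + ‖lam‖) / 2
noncomputable def ss (lam : ℂ) : ℝ := Real.log (rr lam / ‖lam‖)
noncomputable def C0 (lam : ℂ) (h : ℕ) : ℝ :=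
  Real.exp (ss lam * (2 * h)) / ss lam ^ (2 * h) * ‖1 - lam‖ ^ (2 * h + 1)
noncomputable def DD (lam : ℂ) : ℝ :=
  (rr lam / ‖lam‖) * ‖1 - lam‖ ^ 2 / ss lam

section

variable {lam : ℂ}

lemma rr_pos (hlam0 : 0 < ‖lam‖) : 0 < rr lam := by
  unfold rr; positivity

lemma rr_lt_one (hlam1 : ‖lam‖ < 1) : rr lam < 1 := by
  unfold rr; linarith

lemma q_lt_rr (hlam1 : ‖lam‖ < 1) : ‖lam‖ < rr lam := by
  unfold rr; linarith

lemma ss_pos (hlam0 : 0 < ‖lam‖) (hlam1 : ‖lam‖ < 1) : 0 < ss lam :=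
  Real.log_pos ((one_lt_div hlam0).2 (q_lt_rr hlam1))

lemma exp_ss (hlam0 : 0 < ‖lam‖) (hlam1 : ‖lam‖ < 1) :
    Real.exp (ss lam) = rr lam / ‖lam‖ :=
  Real.exp_log (by have := rr_pos hlam0; positivity)

lemma DD_nonneg (hlam0 : 0 < ‖lam‖) (hlam1 : ‖lam‖ < 1) : 0 ≤ DD lam := by
  have h1 := rr_pos hlam0
  have h2 := ss_pos hlam0 hlam1
  unfold DD; positivity

end



section
variable {lam : ℂ} {c : ℕ → ℂ} {h : ℕ}

lemma ee_abs_le (hlam0 : 0 < ‖lam‖) (hlam1 : ‖lam‖ < 1)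
    (hc : ∀ n, ‖c n‖ ≤ 1) (u n : ℕ) (hun : u ≤ n) :
    ‖ee lam c h u n‖ ≤
      C0 lam h * rr lam ^ (n - u) * (DD lam ^ u / (u.factorial : ℝ)) := by
  set q : ℝ := ‖lam‖ with hq
  set B : ℝ := ‖1 - lam‖ with hB
  set s : ℝ := ss lam with hsdef
  set ρ : ℝ := rr lam with hρdef
  have hs : 0 < s := ss_pos hlam0 hlam1
  have hρ : 0 < ρ := rr_pos hlam0
  have hqρ : q < ρ := q_lt_rr hlam1
  have habs : ‖ee lam c h u n‖ =
      ‖c n‖ * Real.sqrt ((n.factorial : ℝ) / ((n + 2 * h).factorial : ℝ))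
        * B ^ (2 * h + 1) * (q ^ (n - u) / (u.factorial : ℝ))
        * (((n + 2 * h).choose (n - u) : ℕ) : ℝ) * B ^ (2 * u) := by
    rw [ee, if_pos hun]
    rw [norm_mul, norm_mul, norm_mul, norm_mul, norm_mul, norm_pow, norm_pow, norm_div, norm_pow,
      Complex.norm_natCast, Complex.norm_natCast, Complex.norm_real, Real.norm_eq_abs,
      abs_of_nonneg (Real.sqrt_nonneg _)]
  rw [habs]
  have hsqrt : Real.sqrt ((n.factorial : ℝ) / ((n + 2 * h).factorial : ℝ)) ≤ 1 := by
    rw [show (1:ℝ) = Real.sqrt 1 by simp]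
    apply Real.sqrt_le_sqrt
    rw [div_le_one (by positivity)]
    exact_mod_cast Nat.factorial_le (by omega)
  have hch : (((n + 2 * h).choose (n - u) : ℕ) : ℝ) ≤
      Real.exp (s * ((n : ℝ) + 2 * h)) / s ^ (u + 2 * h) := by
    have h1 : (n + 2 * h).choose (n - u) = (n + 2 * h).choose (u + 2 * h) := by
      rw [← Nat.choose_symm (by omega : n - u ≤ n + 2 * h)]
      congr 1; omega
    rw [h1]
    calc (((n + 2 * h).choose (u + 2 * h) : ℕ) : ℝ)
        ≤ ((n + 2 * h : ℕ) : ℝ) ^ (u + 2 * h) / ((u + 2 * h).factorial : ℝ) :=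
          Nat.choose_le_pow_div _ _
      _ ≤ Real.exp (s * ((n : ℝ) + 2 * h)) / s ^ (u + 2 * h) := by
          have := aux_pow_div_le s ((n : ℝ) + 2 * h) hs (by positivity) (u + 2 * h)
          push_cast at this ⊢
          exact this
  have hq0 : (0:ℝ) < q := hlam0
  have hexp : Real.exp (s * ((n : ℝ) + 2 * h)) =
      (ρ / q) ^ (n - u) * ((ρ / q) ^ u * Real.exp (s * (2 * h))) := by
    rw [show s * ((n : ℝ) + 2 * h) = s * ((n - u : ℕ) : ℝ) + (s * u + s * (2 * h)) by
      push_cast [Nat.cast_sub hun]; ring]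
    rw [Real.exp_add, Real.exp_add]
    rw [show s * ((n - u : ℕ) : ℝ) = ((n - u : ℕ) : ℝ) * s from mul_comm _ _,
      show s * (u : ℝ) = (u : ℝ) * s from mul_comm _ _,
      Real.exp_nat_mul, Real.exp_nat_mul, exp_ss hlam0 hlam1]
  calc ‖c n‖ * Real.sqrt ((n.factorial : ℝ) / ((n + 2 * h).factorial : ℝ))
        * B ^ (2 * h + 1) * (q ^ (n - u) / (u.factorial : ℝ))
        * (((n + 2 * h).choose (n - u) : ℕ) : ℝ) * B ^ (2 * u)
      ≤ 1 * 1 * B ^ (2 * h + 1) * (q ^ (n - u) / (u.factorial : ℝ))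
        * (Real.exp (s * ((n : ℝ) + 2 * h)) / s ^ (u + 2 * h)) * B ^ (2 * u) := by
        gcongr <;> first | exact hc n | exact hsqrt | exact hch | positivity
    _ = C0 lam h * ρ ^ (n - u) * (DD lam ^ u / (u.factorial : ℝ)) := by
        rw [hexp]
        unfold C0 DD
        rw [← hsdef, ← hρdef, ← hq, ← hB]
        have hq0' : q ≠ 0 := hq0.ne'
        have hs0 : s ≠ 0 := hs.ne'
        have e1 : q ^ (n - u) * q⁻¹ ^ (n - u) = 1 := by rw [← mul_pow, mul_inv_cancel₀ hq0', one_pow]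
        have e2 : s ^ u * s⁻¹ ^ u = 1 := by rw [← mul_pow, mul_inv_cancel₀ hs0, one_pow]
        field_simp
        linear_combination (B * B ^ (h * 2) * B ^ (u * 2) * ρ ^ (n - u) * ρ ^ u * q⁻¹ ^ u * s ^ (h * 2)) * (e1 - e2)
lemma summable_ee_abs (hlam0 : 0 < ‖lam‖) (hlam1 : ‖lam‖ < 1)
    (hc : ∀ n, ‖c n‖ ≤ 1) :
    Summable (fun p : ℕ × ℕ => ‖ee lam c h p.1 p.2‖) := by
  have hρ := rr_pos hlam0
  have hρ1 := rr_lt_one hlam1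
  have hD := DD_nonneg hlam0 hlam1
  have hmaj : Summable (fun p : ℕ × ℕ =>
      C0 lam h * rr lam ^ p.2 * (DD lam ^ p.1 / (p.1.factorial : ℝ))) := by
    have h1 : Summable (fun u : ℕ => DD lam ^ u / (u.factorial : ℝ)) :=
      Real.summable_pow_div_factorial _
    have h2 : Summable (fun m : ℕ => C0 lam h * rr lam ^ m) :=
      (summable_geometric_of_lt_one hρ.le hρ1).mul_left _
    have hC0 : 0 ≤ C0 lam h := by
      have hs := ss_pos hlam0 hlam1
      unfold C0; positivity
    exact (h1.mul_of_nonneg h2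
      (fun u => by positivity) (fun m => by positivity)).congr (fun p => by ring)
  have hφ : Function.Injective (fun p : ℕ × ℕ => ((p.1, p.1 + p.2) : ℕ × ℕ)) := by
    intro a b hab
    simp only [Prod.mk.injEq] at hab
    exact Prod.ext hab.1 (by omega)
  refine (hφ.summable_iff ?_).mp ?_
  · intro p hp
    have hnle : ¬ p.1 ≤ p.2 := by
      intro hle
      exact hp ⟨(p.1, p.2 - p.1), by simp [Prod.ext_iff]; omega⟩
    simp [ee_of_gt hnle]
  · apply hmaj.of_nonneg_of_le (fun p => norm_nonneg _)
    intro p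
    have := ee_abs_le (c := c) (h := h) hlam0 hlam1 hc p.1 (p.1 + p.2) (Nat.le_add_right _ _)
    simpa [Nat.add_sub_cancel_left] using this

lemma summable_ee_abs_row (hlam0 : 0 < ‖lam‖) (hlam1 : ‖lam‖ < 1)
    (hc : ∀ n, ‖c n‖ ≤ 1) (u : ℕ) :
    Summable (fun n => ‖ee lam c h u n‖) :=
  (summable_ee_abs hlam0 hlam1 hc).prod_factor u

lemma summable_rowSums (hlam0 : 0 < ‖lam‖) (hlam1 : ‖lam‖ < 1)
    (hc : ∀ n, ‖c n‖ ≤ 1) :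
    Summable (fun u => ∑' n, ‖ee lam c h u n‖) :=
  ((summable_prod_of_nonneg (fun p => norm_nonneg _)).mp
    (summable_ee_abs hlam0 hlam1 hc)).2

end

noncomputable def aa (lam : ℂ) (c : ℕ → ℂ) (h : ℕ) (u : ℕ) : ℂ := ∑' n, ee lam c h u n

noncomputable def AA (lam : ℂ) (c : ℕ → ℂ) (h : ℕ) (i : ℕ) : ℂ :=
  if 2 * h ≤ i ∧ (i - 2 * h) % 2 = 0 then aa lam c h ((i - 2 * h) / 2) else 0

lemma AA_apply (lam : ℂ) (c : ℕ → ℂ) (h u : ℕ) :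
    AA lam c h (2 * h + 2 * u) = aa lam c h u := by
  rw [AA, if_pos ⟨by omega, by omega⟩]
  congr 1
  omega

lemma AA_eq_zero (lam : ℂ) (c : ℕ → ℂ) (h : ℕ) {i : ℕ} (hi : ¬ ∃ u, 2 * h + 2 * u = i) :
    AA lam c h i = 0 := by
  rw [AA, if_neg]
  rintro ⟨h1, h2⟩
  exact hi ⟨(i - 2 * h) / 2, by omega⟩

section
variable {lam : ℂ} {c : ℕ → ℂ} {h : ℕ}

lemma norm_aa_le (hlam0 : 0 < ‖lam‖) (hlam1 : ‖lam‖ < 1)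
    (hc : ∀ n, ‖c n‖ ≤ 1) (u : ℕ) :
    ‖aa lam c h u‖ ≤ ∑' n, ‖ee lam c h u n‖ := by
  refine (norm_tsum_le_tsum_norm ?_).trans_eq (by simp)
  simpa using summable_ee_abs_row hlam0 hlam1 hc u

lemma summable_norm_AA (hlam0 : 0 < ‖lam‖) (hlam1 : ‖lam‖ < 1)
    (hc : ∀ n, ‖c n‖ ≤ 1) :
    Summable (fun i => ‖AA lam c h i‖) := by
  have hι : Function.Injective (fun u : ℕ => 2 * h + 2 * u) := by
    intro a b hab
    dsimp only at hab
    omega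
  refine (hι.summable_iff ?_).mp ?_
  · intro i hi
    rw [AA_eq_zero lam c h (fun ⟨u, hu⟩ => hi ⟨u, hu⟩), norm_zero]
  · refine (summable_rowSums (h := h) hlam0 hlam1 hc).of_nonneg_of_le
      (fun u => norm_nonneg _) ?_
    intro u
    simpa [AA_apply] using norm_aa_le hlam0 hlam1 hc u

lemma hasSum_AA (hlam0 : 0 < ‖lam‖) (hlam1 : ‖lam‖ < 1)
    (hc : ∀ n, ‖c n‖ ≤ 1) (y : ℝ) (hy : |y| ≤ 1) :
    HasSum (fun i => (y : ℂ) ^ i * AA lam c h i)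
      (Complex.exp ((1 - lam) * (y : ℂ) ^ 2) * ∑' n : ℕ, c n * Kfun lam n (2 * h) y) := by
  rw [F_eq]
  -- product summability with the weight
  have hyn : ∀ e : ℕ, ‖(y : ℂ) ^ e‖ ≤ 1 := by
    intro e
    rw [norm_pow, Complex.norm_real, Real.norm_eq_abs]
    exact pow_le_one₀ (abs_nonneg _) hy
  have hsum2 : Summable (fun p : ℕ × ℕ =>
      ee lam c h p.1 p.2 * (y : ℂ) ^ (2 * h + 2 * p.1)) := by
    apply Summable.of_norm
    refine (summable_ee_abs (h := h) hlam0 hlam1 hc).of_nonneg_of_le (fun p => norm_nonneg _) ?_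
    intro p
    rw [norm_mul]
    calc ‖ee lam c h p.1 p.2‖ * ‖(y:ℂ) ^ (2 * h + 2 * p.1)‖
        ≤ ‖ee lam c h p.1 p.2‖ * 1 := by gcongr; exact hyn _
      _ = ‖ee lam c h p.1 p.2‖ := by rw [mul_one]
  -- rewrite double sum
  have hstep1 : (∑' n : ℕ, ∑ u ∈ Finset.range (n + 1),
        ee lam c h u n * (y : ℂ) ^ (2 * h + 2 * u)) =
      ∑' (u : ℕ) (n : ℕ), ee lam c h u n * (y : ℂ) ^ (2 * h + 2 * u) := by
    rw [← Summable.tsum_comm (f := fun u n => ee lam c h u n * (y : ℂ) ^ (2 * h + 2 * u)) hsum2]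
    refine tsum_congr fun n => ?_
    refine (tsum_eq_sum ?_).symm
    intro u hu
    rw [ee_of_gt (by simp at hu; omega), zero_mul]
  have hstep2 : ∀ u : ℕ, (∑' n : ℕ, ee lam c h u n * (y : ℂ) ^ (2 * h + 2 * u)) =
      aa lam c h u * (y : ℂ) ^ (2 * h + 2 * u) := fun u => tsum_mul_right
  rw [hstep1]
  rw [tsum_congr hstep2]
  -- now HasSum via the injection
  have hι : Function.Injective (fun u : ℕ => 2 * h + 2 * u) := by
    intro a b hab
    dsimp only at hab
    omega
  refine (hι.hasSum_iff ?_).mp ?_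
  · intro i hi
    rw [AA_eq_zero lam c h (fun ⟨u, hu⟩ => hi ⟨u, hu⟩), mul_zero]
  · have hsummable : Summable (fun u : ℕ => aa lam c h u * (y : ℂ) ^ (2 * h + 2 * u)) := by
      apply Summable.of_norm
      refine (summable_rowSums (h := h) hlam0 hlam1 hc).of_nonneg_of_le (fun u => norm_nonneg _) ?_
      intro u
      rw [norm_mul]
      calc ‖aa lam c h u‖ * ‖(y:ℂ) ^ (2 * h + 2 * u)‖
          ≤ ‖aa lam c h u‖ * 1 := by gcongr; exact hyn _
        _ ≤ ∑' n, ‖ee lam c h u n‖ := by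
            rw [mul_one]; exact norm_aa_le hlam0 hlam1 hc u
    have heq : ((fun i => (y : ℂ) ^ i * AA lam c h i) ∘ fun u => 2 * h + 2 * u) =
        fun u => aa lam c h u * (y : ℂ) ^ (2 * h + 2 * u) := by
      funext u
      simp only [Function.comp_apply, AA_apply]
      ring
    rw [heq]
    exact hsummable.hasSum

lemma summable_term (hlam0 : 0 < ‖lam‖) (hlam1 : ‖lam‖ < 1)
    (hc : ∀ n, ‖c n‖ ≤ 1) (h j : ℕ) :
    Summable (fun m : ℕ => ‖c ((j - h) + m) * lam ^ ((j - h) + m) *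
        ((Real.sqrt ((((j - h) + m + 2 * h).factorial : ℝ) *
          (((j - h) + m).factorial : ℝ)) : ℝ) : ℂ) /
        ((((j - h) + m + h - j).factorial : ℕ) : ℂ)‖) := by
  set q : ℝ := ‖lam‖ with hq
  set K : ℕ := j + 2 * h with hK
  -- majorant
  have hbase : Summable (fun m : ℕ => ((m : ℝ)) ^ K * q ^ m) := by
    apply summable_pow_mul_geometric_of_norm_lt_one
    rwa [Real.norm_eq_abs, abs_of_nonneg hlam0.le]
  have hshift : Summable (fun m : ℕ => ((m + 1 : ℕ) : ℝ) ^ K * q ^ (m + 1)) := by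
    exact_mod_cast (summable_nat_add_iff 1).mpr hbase
  have hmaj : Summable (fun m : ℕ => ((K + 1 : ℕ) : ℝ) ^ K * (((m + 1 : ℕ) : ℝ) ^ K * q ^ m)) := by
    apply Summable.mul_left
    refine ((hshift.mul_left q⁻¹).congr fun m => ?_)
    rw [pow_succ]
    field_simp
  refine hmaj.of_nonneg_of_le (fun m => norm_nonneg _) ?_
  intro m
  set n : ℕ := (j - h) + m with hn
  have habs : ‖c n * lam ^ n *
        ((Real.sqrt (((n + 2 * h).factorial : ℝ) * ((n).factorial : ℝ)) : ℝ) : ℂ) /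
        (((n + h - j).factorial : ℕ) : ℂ)‖ =
      ‖c n‖ * q ^ n *
        Real.sqrt (((n + 2 * h).factorial : ℝ) * ((n).factorial : ℝ)) /
        (((n + h - j).factorial : ℕ) : ℝ) := by
    rw [norm_div, norm_mul, norm_mul, norm_pow, Complex.norm_natCast, Complex.norm_real, Real.norm_eq_abs,
      abs_of_nonneg (Real.sqrt_nonneg _)]
  rw [habs]
  have h1 : ‖c n‖ * q ^ n ≤ q ^ m := by
    calc ‖c n‖ * q ^ n ≤ 1 * q ^ n := by
          gcongr; exact hc n
      _ = q ^ n := one_mul _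
      _ ≤ q ^ m := pow_le_pow_of_le_one hlam0.le hlam1.le (by omega)
  have h2 : Real.sqrt (((n + 2 * h).factorial : ℝ) * ((n).factorial : ℝ)) ≤
      ((m + K).factorial : ℝ) := by
    calc Real.sqrt (((n + 2 * h).factorial : ℝ) * ((n).factorial : ℝ))
        ≤ Real.sqrt (((m + K).factorial : ℝ) * ((m + K).factorial : ℝ)) := by
          apply Real.sqrt_le_sqrt
          have e1 : (n + 2 * h).factorial ≤ (m + K).factorial := Nat.factorial_le (by omega)
          have e2 : (n).factorial ≤ (m + K).factorial := Nat.factorial_le (by omega)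
          exact_mod_cast Nat.mul_le_mul e1 e2
      _ = ((m + K).factorial : ℝ) := Real.sqrt_mul_self (by positivity)
  have h3 : (1 : ℝ) / (((n + h - j).factorial : ℕ) : ℝ) ≤ 1 / ((m.factorial : ℕ) : ℝ) := by
    apply one_div_le_one_div_of_le (by positivity)
    exact_mod_cast Nat.factorial_le (by omega)
  calc ‖c n‖ * q ^ n *
        Real.sqrt (((n + 2 * h).factorial : ℝ) * ((n).factorial : ℝ)) /
        (((n + h - j).factorial : ℕ) : ℝ)
      ≤ q ^ m * ((m + K).factorial : ℝ) / ((m.factorial : ℕ) : ℝ) := by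
        apply div_le_div₀ (by positivity) _ (by positivity)
          (by exact_mod_cast Nat.factorial_le (by omega))
        exact mul_le_mul h1 h2 (Real.sqrt_nonneg _) (by positivity)
    _ = q ^ m * (((m + 1).ascFactorial K : ℕ) : ℝ) := by
        rw [mul_div_assoc]
        congr 1
        rw [div_eq_iff (by positivity)]
        rw [← Nat.cast_mul]
        norm_cast
        rw [mul_comm]
        exact (Nat.factorial_mul_ascFactorial m K).symm
    _ ≤ q ^ m * (((m + K : ℕ) : ℝ)) ^ K := by
        gcongr
        exact_mod_cast Nat.ascFactorial_le_pow_add m K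
    _ ≤ ((K + 1 : ℕ) : ℝ) ^ K * (((m + 1 : ℕ) : ℝ) ^ K * q ^ m) := by
        have : ((m + K : ℕ) : ℝ) ^ K ≤ (((K + 1) * (m + 1) : ℕ) : ℝ) ^ K := by
          gcongr
          exact_mod_cast (by nlinarith : (m + K : ℕ) ≤ (K + 1) * (m + 1))
        calc q ^ m * ((m + K : ℕ) : ℝ) ^ K ≤ q ^ m * (((K + 1) * (m + 1) : ℕ) : ℝ) ^ K := by
              gcongr
          _ = ((K + 1 : ℕ) : ℝ) ^ K * (((m + 1 : ℕ) : ℝ) ^ K * q ^ m) := by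
              push_cast
              rw [mul_pow]
              ring

lemma final_eq (hlam0 : 0 < ‖lam‖)
    (h j : ℕ) (hhj : h ≤ j) :
    ((2 * j).factorial : ℂ) * aa lam c h (j - h) =
      (((2 * j).choose (j - h) : ℕ) : ℂ) * (1 - lam) ^ (2 * j + 1) *
        lam ^ ((h : ℤ) - (j : ℤ)) *
        ∑' m : ℕ,
          c ((j - h) + m) * lam ^ ((j - h) + m) *
            ((Real.sqrt ((((j - h) + m + 2 * h).factorial : ℝ) *
              (((j - h) + m).factorial : ℝ)) : ℝ) : ℂ) /
            ((((j - h) + m + h - j).factorial : ℕ) : ℂ) := by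
  have hl0 : lam ≠ 0 := by
    intro h0
    rw [h0] at hlam0
    simp at hlam0
  obtain ⟨d, rfl⟩ : ∃ d, j = h + d := ⟨j - h, by omega⟩
  have e1 : ∀ m : ℕ, d + m + h - (h + d) = m := fun m => by omega
  simp only [Nat.add_sub_cancel_left, e1]
  -- shift the tsum in aa
  have hshift : aa lam c h d = ∑' m, ee lam c h d (d + m) := by
    rw [aa]
    refine (Function.Injective.tsum_eq (g := fun m : ℕ => d + m)
      (fun a b hab => by dsimp only at hab; omega) ?_).symm
    intro n hn
    rcases le_or_gt d n with hdn | hdn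
    · exact ⟨n - d, by dsimp only; omega⟩
    · exact absurd (ee_of_gt (by omega : ¬ d ≤ n)) hn
  rw [hshift, ← tsum_mul_left, ← tsum_mul_left]
  refine tsum_congr fun m => ?_
  -- per-term identity
  rw [ee, if_pos (Nat.le_add_right d m)]
  simp only [Nat.add_sub_cancel_left]
  have hch1 : (((d + m + 2 * h).choose m : ℕ) : ℂ) =
      ((d + m + 2 * h).factorial : ℂ) /
        ((m.factorial : ℂ) * ((d + 2 * h).factorial : ℂ)) := by
    rw [Nat.cast_choose ℂ (by omega : m ≤ d + m + 2 * h),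
      show d + m + 2 * h - m = d + 2 * h by omega]
  have hch2 : (((2 * (h + d)).choose d : ℕ) : ℂ) =
      ((2 * (h + d)).factorial : ℂ) /
        ((d.factorial : ℂ) * ((d + 2 * h).factorial : ℂ)) := by
    rw [Nat.cast_choose ℂ (by omega : d ≤ 2 * (h + d)),
      show 2 * (h + d) - d = d + 2 * h by omega]
  have hsr : Real.sqrt (((d + m).factorial : ℝ) / ((d + m + 2 * h).factorial : ℝ)) *
      ((d + m + 2 * h).factorial : ℝ) =
      Real.sqrt (((d + m + 2 * h).factorial : ℝ) * ((d + m).factorial : ℝ)) := by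
    rw [Real.sqrt_div (by positivity) _, Real.sqrt_mul (by positivity) _,
      div_mul_eq_mul_div, mul_div_assoc, Real.div_sqrt]
    ring
  have hsC : ((Real.sqrt (((d + m).factorial : ℝ) / ((d + m + 2 * h).factorial : ℝ)) : ℝ) : ℂ) =
      ((Real.sqrt (((d + m + 2 * h).factorial : ℝ) * ((d + m).factorial : ℝ)) : ℝ) : ℂ) /
        (((d + m + 2 * h).factorial : ℕ) : ℂ) := by
    rw [eq_div_iff (by exact_mod_cast Nat.cast_ne_zero.mpr (Nat.factorial_ne_zero _))]
    exact_mod_cast congrArg Complex.ofReal hsr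
  have hz : lam ^ ((h : ℤ) - ((h + d : ℕ) : ℤ)) = (lam ^ d)⁻¹ := by
    rw [show (h : ℤ) - ((h + d : ℕ) : ℤ) = -(d : ℤ) by push_cast; ring, zpow_neg, zpow_natCast]
  rw [hch1, hch2, hsC, hz, pow_add lam d m]
  have hm0 : (m.factorial : ℂ) ≠ 0 := Nat.cast_ne_zero.mpr (Nat.factorial_ne_zero _)
  have hd0 : (d.factorial : ℂ) ≠ 0 := Nat.cast_ne_zero.mpr (Nat.factorial_ne_zero _)
  have hd2h0 : ((d + 2 * h).factorial : ℂ) ≠ 0 := Nat.cast_ne_zero.mpr (Nat.factorial_ne_zero _)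
  have hN0 : ((d + m + 2 * h).factorial : ℂ) ≠ 0 := Nat.cast_ne_zero.mpr (Nat.factorial_ne_zero _)
  have hld : lam ^ d ≠ 0 := pow_ne_zero _ hl0
  field_simp
  ring

end

end Stmt12

/-- Even case of the differentiated series (equation (16) of the paper):
for `0 < |λ| < 1`, `|c_n| ≤ 1`, `k = 2h`, `l = 2j`, the `2j`-th derivative at `0` of
`r ↦ e^{(1−λ)r²} ∑_n c_n K^λ_{n,n+2h}(r)` exists and equals
`C(2j, j−h) (1−λ)^{2j+1} λ^{h−j} ∑_{n=max(0,j−h)}^∞ c_n λ^n √((n+2h)! n!)/(n−j+h)!`,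
the series converging absolutely. -/
theorem stmt_12 (lam : ℂ) (hlam0 : 0 < ‖lam‖) (hlam1 : ‖lam‖ < 1)
    (c : ℕ → ℂ) (hc : ∀ n, ‖c n‖ ≤ 1) (h j : ℕ)
    (F : ℝ → ℂ)
    (hF : ∀ r : ℝ, F r = Complex.exp ((1 - lam) * (r : ℂ) ^ 2) *
      ∑' n : ℕ, c n * Kfun lam n (2 * h) r) :
    Summable (fun m : ℕ => ‖
      (c ((j - h) + m) * lam ^ ((j - h) + m) *
        ((Real.sqrt ((((j - h) + m + 2 * h).factorial : ℝ) * (((j - h) + m).factorial : ℝ)) : ℝ) : ℂ) /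
        ((((j - h) + m + h - j).factorial : ℕ) : ℂ))‖) ∧
    ContDiffAt ℝ ((2 * j : ℕ) : ℕ∞) F 0 ∧
    iteratedDeriv (2 * j) F 0 =
      (if h ≤ j then (((2 * j).choose (j - h) : ℕ) : ℂ) else 0) *
        (1 - lam) ^ (2 * j + 1) * lam ^ ((h : ℤ) - (j : ℤ)) *
        ∑' m : ℕ,
          c ((j - h) + m) * lam ^ ((j - h) + m) *
            ((Real.sqrt ((((j - h) + m + 2 * h).factorial : ℝ) * (((j - h) + m).factorial : ℝ)) : ℝ) : ℂ) /
            ((((j - h) + m + h - j).factorial : ℕ) : ℂ) := by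
  classical
  set p : FormalMultilinearSeries ℝ ℝ ℂ :=
    fun i => ContinuousMultilinearMap.mkPiRing ℝ (Fin i) (Stmt12.AA lam c h i) with hpdef
  have hball : HasFPowerSeriesOnBall F p 0 1 := by
    refine ⟨?_, one_pos, ?_⟩
    · have hsum : Summable fun i : ℕ => ‖p i‖ * ((1 : NNReal) : ℝ) ^ i := by
        simp only [hpdef, ContinuousMultilinearMap.norm_mkPiRing, NNReal.coe_one, one_pow,
          mul_one]
        exact Stmt12.summable_norm_AA (h := h) hlam0 hlam1 hc
      simpa using p.le_radius_of_summable hsum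
    · intro y hy
      have hy1 : |y| ≤ 1 := by
        rw [mem_emetric_ball_zero_iff] at hy
        have h2 : ‖y‖₊ < 1 := by rw [enorm_eq_nnnorm] at hy; exact_mod_cast hy
        have h3 : ‖y‖ < 1 := by exact_mod_cast h2
        rw [Real.norm_eq_abs] at h3
        exact h3.le
      have hs := Stmt12.hasSum_AA (h := h) hlam0 hlam1 hc y hy1
      rw [zero_add, hF y]
      have happ : (fun i => p i fun _ => y) = fun i => (y : ℂ) ^ i * Stmt12.AA lam c h i := by
        funext i
        simp [hpdef, ContinuousMultilinearMap.mkPiRing_apply, Finset.prod_const,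
          Complex.real_smul, Complex.ofReal_pow]
      rw [happ]
      exact hs
  have hAN : iteratedDeriv (2 * j) F 0 = ((2 * j).factorial : ℂ) * Stmt12.AA lam c h (2 * j) := by
    have hfs := hball.factorial_smul (1 : ℝ) (2 * j)
    rw [iteratedDeriv_eq_iteratedFDeriv, ← hfs]
    simp [hpdef, ContinuousMultilinearMap.mkPiRing_apply, nsmul_eq_mul]
  refine ⟨Stmt12.summable_term hlam0 hlam1 hc h j, hball.analyticAt.contDiffAt, ?_⟩
  by_cases hhj : h ≤ j
  · rw [if_pos hhj, hAN]
    have hAa : Stmt12.AA lam c h (2 * j) = Stmt12.aa lam c h (j - h) := by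
      rw [show 2 * j = 2 * h + 2 * (j - h) by omega, Stmt12.AA_apply]
    rw [hAa]
    exact Stmt12.final_eq hlam0 h j hhj
  · rw [if_neg hhj, hAN, Stmt12.AA_eq_zero lam c h (by rintro ⟨u, hu⟩; omega)]
    simp
end

section
/- Let λ ∈ ℂ with |λ| < 1, let l ∈ ℕ, and let (ρ_{n'})_{n'∈ℕ} be complex numbers with |ρ_{n'}| ≤ 1 for all n'. Set x_{n'} := λ^{n'}·√((n'+l)!·n'!)·ρ_{n'}, and for n ∈ ℕ and integers k ≥ n define R^n_k := ∑_{n'=k+1}^∞ ∑_{p=n}^k (−1)^{p+n}·x_{n'}/((p−n)!·(n'−p)!). Then |R^n_k| ≤ ((k+l)!/(k−n)!)·(1−|λ|)^{−(l+1)}·(|λ|/(1−|λ|))^k; consequently, if |λ| < 1/2, then lim_{k→∞} R^n_k = 0 for every n ∈ ℕ. -/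
open Filter

private lemma alt_sum_aux (M : ℕ) : ∀ K, K ≤ M →
    ∑ j ∈ Finset.range (K + 1), (-1 : ℂ) ^ j * ((M + 1).choose j : ℂ)
      = (-1 : ℂ) ^ K * (M.choose K : ℂ) := by
  intro K
  induction K with
  | zero => simp
  | succ K ih =>
    intro h
    rw [Finset.sum_range_succ, ih (by omega), Nat.choose_succ_succ M K]
    push_cast
    ring

private lemma fact_le_aux (b d : ℕ) : (b + d).factorial ≤ b.factorial * (b + d) ^ d := by
  induction d with
  | zero => simp
  | succ d ih =>
    calc (b + (d + 1)).factorial = (b + d + 1) * (b + d).factorial := by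
          rw [show b + (d + 1) = (b + d) + 1 from rfl, Nat.factorial_succ]
      _ ≤ (b + d + 1) * (b.factorial * (b + d) ^ d) := Nat.mul_le_mul_left _ ih
      _ ≤ (b + d + 1) * (b.factorial * (b + d + 1) ^ d) :=
          Nat.mul_le_mul_left _ (Nat.mul_le_mul_left _ (Nat.pow_le_pow_left (by omega) d))
      _ = b.factorial * (b + (d + 1)) ^ (d + 1) := by ring

private lemma fact_ineq_aux (A K m : ℕ) :
    ((A + m + 1).factorial : ℝ) * ((K + m).choose K : ℝ) / ((K + m + 1).factorial : ℝ)
      ≤ (A.factorial : ℝ) / (K.factorial : ℝ) * ((A + m + 1).choose A : ℝ) := by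
  have hKf : (0 : ℝ) < (K.factorial : ℝ) := by exact_mod_cast K.factorial_pos
  have hmf : (0 : ℝ) < (m.factorial : ℝ) := by exact_mod_cast m.factorial_pos
  have hm1f : (0 : ℝ) < ((m + 1).factorial : ℝ) := by exact_mod_cast (m + 1).factorial_pos
  have hKmf : (0 : ℝ) < ((K + m + 1).factorial : ℝ) := by exact_mod_cast (K + m + 1).factorial_pos
  have c1 : ((K + m).choose K : ℝ) * ((K.factorial : ℝ) * (m.factorial : ℝ))
      = ((K + m).factorial : ℝ) := by
    have h := Nat.choose_mul_factorial_mul_factorial (Nat.le_add_right K m)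
    rw [Nat.add_sub_cancel_left] at h
    push_cast [← h]
    ring
  have c2 : ((A + m + 1).choose A : ℝ) * ((A.factorial : ℝ) * ((m + 1).factorial : ℝ))
      = ((A + m + 1).factorial : ℝ) := by
    have h := Nat.choose_mul_factorial_mul_factorial (Nat.le_add_right A (m + 1))
    rw [Nat.add_sub_cancel_left] at h
    rw [show A + (m + 1) = A + m + 1 from rfl] at h
    push_cast [← h]
    ring
  have e3 : ((K + m + 1).factorial : ℝ) = ((K : ℝ) + m + 1) * ((K + m).factorial : ℝ) := by
    push_cast [Nat.factorial_succ (K + m)]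
    ring
  have e4 : ((m + 1).factorial : ℝ) = ((m : ℝ) + 1) * (m.factorial : ℝ) := by
    push_cast [Nat.factorial_succ m]
    ring
  rw [div_mul_eq_mul_div, div_le_div_iff₀ hKmf hKf]
  rw [← mul_le_mul_iff_of_pos_right (mul_pos hmf hm1f)]
  calc ((A + m + 1).factorial : ℝ) * ((K + m).choose K : ℝ) * (K.factorial : ℝ)
        * ((m.factorial : ℝ) * ((m + 1).factorial : ℝ))
      = ((A + m + 1).factorial : ℝ) * (((K + m).choose K : ℝ) * ((K.factorial : ℝ) * (m.factorial : ℝ)))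
          * ((m + 1).factorial : ℝ) := by ring
    _ = ((A + m + 1).factorial : ℝ) * ((K + m).factorial : ℝ) * ((m + 1).factorial : ℝ) := by
          rw [c1]
    _ ≤ ((A + m + 1).factorial : ℝ) * ((K + m).factorial : ℝ) * (((K : ℝ) + m + 1) * (m.factorial : ℝ)) := by
          rw [e4]
          have hK0 : (0 : ℝ) ≤ (K : ℝ) := Nat.cast_nonneg K
          have h1 : ((m : ℝ) + 1) * (m.factorial : ℝ) ≤ ((K : ℝ) + m + 1) * (m.factorial : ℝ) := by
            apply mul_le_mul_of_nonneg_right _ hmf.le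
            linarith
          apply mul_le_mul_of_nonneg_left h1
          positivity
    _ = ((A + m + 1).choose A : ℝ) * ((A.factorial : ℝ) * ((m + 1).factorial : ℝ))
          * (((K : ℝ) + m + 1) * ((K + m).factorial : ℝ)) * (m.factorial : ℝ) := by
          rw [c2]
          ring
    _ = (A.factorial : ℝ) * ((A + m + 1).choose A : ℝ) * ((K + m + 1).factorial : ℝ)
          * ((m.factorial : ℝ) * ((m + 1).factorial : ℝ)) := by
          rw [e3]
          ring

/-- The remainder bound controlling matrix inversion for the λ-distributions:
with `x_{n'} = λ^{n'} √((n'+l)! n'!) ρ_{n'}`, `|ρ_{n'}| ≤ 1`, and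
`R^n_k = ∑_{n'=k+1}^∞ ∑_{p=n}^k (−1)^{p+n} x_{n'}/((p−n)!(n'−p)!)` (the defining series
being summable), one has
`|R^n_k| ≤ ((k+l)!/(k−n)!) (1−|λ|)^{−(l+1)} (|λ|/(1−|λ|))^k` for `n ≤ k`;
consequently, if `|λ| < 1/2`, then `R^n_k → 0` as `k → ∞` for every `n`. -/
theorem stmt_14 (lam : ℂ) (hlam : ‖lam‖ < 1) (l : ℕ)
    (ρ : ℕ → ℂ) (hρ : ∀ n', ‖ρ n'‖ ≤ 1)
    (x : ℕ → ℂ)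
    (hx : ∀ n' : ℕ, x n' = lam ^ n' *
      ((Real.sqrt (((n' + l).factorial : ℝ) * (n'.factorial : ℝ)) : ℝ) : ℂ) * ρ n')
    (R : ℕ → ℕ → ℂ)
    (hR : ∀ n k : ℕ, R n k = ∑' m : ℕ, ∑ p ∈ Finset.Icc n k,
      (-1 : ℂ) ^ (p + n) * x (k + 1 + m) /
        (((p - n).factorial : ℂ) * (((k + 1 + m) - p).factorial : ℂ))) :
    (∀ n k : ℕ, n ≤ k → Summable fun m : ℕ => ∑ p ∈ Finset.Icc n k,
      (-1 : ℂ) ^ (p + n) * x (k + 1 + m) /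
        (((p - n).factorial : ℂ) * (((k + 1 + m) - p).factorial : ℂ))) ∧
    (∀ n k : ℕ, n ≤ k →
      ‖R n k‖ ≤
        ((k + l).factorial : ℝ) / ((k - n).factorial : ℝ) *
          (1 / (1 - ‖lam‖) ^ (l + 1)) *
          (‖lam‖ / (1 - ‖lam‖)) ^ k) ∧
    (‖lam‖ < 1 / 2 → ∀ n : ℕ, Tendsto (fun k => R n k) atTop (nhds 0)) := by
  set q := ‖lam‖ with hq
  have hq0 : 0 ≤ q := norm_nonneg lam
  have h1q : 0 < 1 - q := by linarith
  -- bound on |x j|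
  have hxb : ∀ j : ℕ, ‖x j‖ ≤ q ^ j * ((j + l).factorial : ℝ) := by
    intro j
    rw [hx j, norm_mul, norm_mul, norm_pow, ← hq]
    have h1 : ‖((Real.sqrt (((j + l).factorial : ℝ) * (j.factorial : ℝ)) : ℝ) : ℂ)‖
        = Real.sqrt (((j + l).factorial : ℝ) * (j.factorial : ℝ)) := by
      rw [Complex.norm_real, Real.norm_eq_abs, abs_of_nonneg (Real.sqrt_nonneg _)]
    rw [h1]
    have hle : (j.factorial : ℝ) ≤ ((j + l).factorial : ℝ) := by
      exact_mod_cast Nat.factorial_le (Nat.le_add_right j l)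
    have hpos : (0 : ℝ) < ((j + l).factorial : ℝ) := by exact_mod_cast (j + l).factorial_pos
    have h2 : Real.sqrt (((j + l).factorial : ℝ) * (j.factorial : ℝ)) ≤ ((j + l).factorial : ℝ) := by
      have hmono : (((j + l).factorial : ℝ) * (j.factorial : ℝ)) ≤ (((j + l).factorial : ℝ)) ^ 2 := by
        nlinarith
      calc Real.sqrt (((j + l).factorial : ℝ) * (j.factorial : ℝ))
          ≤ Real.sqrt ((((j + l).factorial : ℝ)) ^ 2) := Real.sqrt_le_sqrt hmono
        _ = ((j + l).factorial : ℝ) := Real.sqrt_sq hpos.le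
    calc q ^ j * Real.sqrt (((j + l).factorial : ℝ) * (j.factorial : ℝ)) * ‖ρ j‖
        ≤ q ^ j * ((j + l).factorial : ℝ) * 1 := by
          apply mul_le_mul
          · apply mul_le_mul_of_nonneg_left h2 (by positivity)
          · exact hρ j
          · exact norm_nonneg _
          · positivity
      _ = q ^ j * ((j + l).factorial : ℝ) := by ring
  -- exact evaluation of the inner sum
  have key : ∀ n k m : ℕ, n ≤ k →
      (∑ p ∈ Finset.Icc n k, (-1 : ℂ) ^ (p + n) * x (k + 1 + m) /
          (((p - n).factorial : ℂ) * (((k + 1 + m) - p).factorial : ℂ)))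
        = x (k + 1 + m) * ((-1 : ℂ) ^ (k - n) * (((k - n) + m).choose (k - n) : ℂ)
            / (((k - n) + m + 1).factorial : ℂ)) := by
    intro n k m hnk
    rw [← Finset.Ico_add_one_right_eq_Icc, Finset.sum_Ico_eq_sum_range]
    rw [show k + 1 - n = (k - n) + 1 by omega]
    have step : ∀ j ∈ Finset.range ((k - n) + 1),
        (-1 : ℂ) ^ ((n + j) + n) * x (k + 1 + m) /
            ((((n + j) - n).factorial : ℂ) * (((k + 1 + m) - (n + j)).factorial : ℂ))
          = (-1 : ℂ) ^ j * (((k - n) + m + 1).choose j : ℂ)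
              * (x (k + 1 + m) / ((((k - n) + m + 1).factorial : ℂ))) := by
      intro j hj
      simp only [Finset.mem_range] at hj
      have h1 : (n + j) - n = j := by omega
      have h2 : (k + 1 + m) - (n + j) = ((k - n) + m + 1) - j := by omega
      have h3 : (-1 : ℂ) ^ ((n + j) + n) = (-1 : ℂ) ^ j := by
        rw [show (n + j) + n = j + 2 * n by ring, pow_add, pow_mul]
        simp
      rw [h1, h2, h3]
      have hcast : ((((k - n) + m + 1).choose j : ℂ)) * (j.factorial : ℂ)
          * (((((k - n) + m + 1) - j).factorial : ℂ)) = ((((k - n) + m + 1).factorial : ℂ)) := by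
        exact_mod_cast Nat.choose_mul_factorial_mul_factorial (show j ≤ (k - n) + m + 1 by omega)
      have hne1 : (j.factorial : ℂ) ≠ 0 := Nat.cast_ne_zero.2 j.factorial_ne_zero
      have hne2 : ((((k - n) + m + 1) - j).factorial : ℂ) ≠ 0 :=
        Nat.cast_ne_zero.2 (Nat.factorial_ne_zero _)
      have hne3 : ((((k - n) + m + 1).factorial : ℂ)) ≠ 0 :=
        Nat.cast_ne_zero.2 (Nat.factorial_ne_zero _)
      rw [mul_comm ((-1 : ℂ) ^ j * (((k - n) + m + 1).choose j : ℂ)) _, div_mul_eq_mul_div]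
      rw [div_eq_div_iff (mul_ne_zero hne1 hne2) hne3]
      linear_combination (-((-1 : ℂ) ^ j) * x (k + 1 + m)) * hcast
    rw [Finset.sum_congr rfl step, ← Finset.sum_mul]
    rw [alt_sum_aux ((k - n) + m) (k - n) (Nat.le_add_right _ _)]
    ring
  -- main bound per (n,k)
  have main : ∀ n k : ℕ, n ≤ k →
      (Summable fun m : ℕ => ∑ p ∈ Finset.Icc n k,
        (-1 : ℂ) ^ (p + n) * x (k + 1 + m) /
          (((p - n).factorial : ℂ) * (((k + 1 + m) - p).factorial : ℂ))) ∧
      ‖R n k‖ ≤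
        ((k + l).factorial : ℝ) / ((k - n).factorial : ℝ) *
          (1 / (1 - q) ^ (l + 1)) * (q / (1 - q)) ^ k := by
    intro n k hnk
    have hqn : ‖q‖ < 1 := by rw [Real.norm_eq_abs, abs_of_nonneg hq0]; exact hlam
    have hu : HasSum
        (fun m : ℕ => (((k + l).factorial : ℝ) / ((k - n).factorial : ℝ) * q ^ k)
          * (((m + (k + l)).choose (k + l) : ℝ) * q ^ m))
        ((((k + l).factorial : ℝ) / ((k - n).factorial : ℝ) * q ^ k)
          * (1 / (1 - q) ^ ((k + l) + 1))) :=
      (hasSum_choose_mul_geometric_of_norm_lt_one (k + l) hqn).mul_left _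
    have hushift : Summable (fun m : ℕ =>
        (((k + l).factorial : ℝ) / ((k - n).factorial : ℝ) * q ^ k)
          * ((((m + 1) + (k + l)).choose (k + l) : ℝ) * q ^ (m + 1))) :=
      (_root_.summable_nat_add_iff 1).2 hu.summable
    have hbnd : ∀ m : ℕ, ‖x (k + 1 + m) * ((-1 : ℂ) ^ (k - n) * (((k - n) + m).choose (k - n) : ℂ)
          / (((k - n) + m + 1).factorial : ℂ))‖
        ≤ (((k + l).factorial : ℝ) / ((k - n).factorial : ℝ) * q ^ k)
            * ((((m + 1) + (k + l)).choose (k + l) : ℝ) * q ^ (m + 1)) := by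
      intro m
      rw [norm_mul]
      have h1 : ‖(-1 : ℂ) ^ (k - n) * (((k - n) + m).choose (k - n) : ℂ)
            / (((k - n) + m + 1).factorial : ℂ)‖
          = (((k - n) + m).choose (k - n) : ℝ) / ((((k - n) + m + 1).factorial : ℝ)) := by
        rw [norm_div, norm_mul, norm_pow]
        simp
      rw [h1]
      calc ‖x (k + 1 + m)‖
            * ((((k - n) + m).choose (k - n) : ℝ) / ((((k - n) + m + 1).factorial : ℝ)))
          ≤ (q ^ (k + 1 + m) * (((k + 1 + m) + l).factorial : ℝ))
              * ((((k - n) + m).choose (k - n) : ℝ) / ((((k - n) + m + 1).factorial : ℝ))) := by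
            apply mul_le_mul_of_nonneg_right (hxb (k + 1 + m))
            positivity
        _ = q ^ (k + 1 + m) * ((((k + l) + m + 1).factorial : ℝ)
              * (((k - n) + m).choose (k - n) : ℝ) / ((((k - n) + m + 1).factorial : ℝ))) := by
            rw [show (k + 1 + m) + l = (k + l) + m + 1 by ring]
            ring
        _ ≤ q ^ (k + 1 + m) * (((k + l).factorial : ℝ) / (((k - n).factorial : ℝ))
              * ((((k + l) + m + 1).choose (k + l) : ℝ))) := by
            apply mul_le_mul_of_nonneg_left (fact_ineq_aux (k + l) (k - n) m)
            positivity
        _ = (((k + l).factorial : ℝ) / ((k - n).factorial : ℝ) * q ^ k)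
              * ((((m + 1) + (k + l)).choose (k + l) : ℝ) * q ^ (m + 1)) := by
            rw [show (m + 1) + (k + l) = (k + l) + m + 1 by ring]
            ring
    have hnormsum : Summable (fun m : ℕ =>
        ‖x (k + 1 + m) * ((-1 : ℂ) ^ (k - n) * (((k - n) + m).choose (k - n) : ℂ)
          / (((k - n) + m + 1).factorial : ℂ))‖) :=
      Summable.of_nonneg_of_le (fun m => norm_nonneg _) hbnd hushift
    have hfs : Summable (fun m : ℕ =>
        x (k + 1 + m) * ((-1 : ℂ) ^ (k - n) * (((k - n) + m).choose (k - n) : ℂ)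
          / (((k - n) + m + 1).factorial : ℂ))) := hnormsum.of_norm
    have hfe : (fun m : ℕ => ∑ p ∈ Finset.Icc n k, (-1 : ℂ) ^ (p + n) * x (k + 1 + m) /
          (((p - n).factorial : ℂ) * (((k + 1 + m) - p).factorial : ℂ)))
        = fun m : ℕ => x (k + 1 + m) * ((-1 : ℂ) ^ (k - n) * (((k - n) + m).choose (k - n) : ℂ)
            / (((k - n) + m + 1).factorial : ℂ)) :=
      funext fun m => key n k m hnk
    constructor
    · rw [hfe]; exact hfs
    · rw [hR n k, hfe]
      have hKfne : ((k - n).factorial : ℝ) ≠ 0 := by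
        exact_mod_cast (k - n).factorial_ne_zero
      calc ‖∑' m : ℕ, x (k + 1 + m) * ((-1 : ℂ) ^ (k - n)
              * (((k - n) + m).choose (k - n) : ℂ) / (((k - n) + m + 1).factorial : ℂ))‖
          = ‖∑' m : ℕ, x (k + 1 + m) * ((-1 : ℂ) ^ (k - n)
              * (((k - n) + m).choose (k - n) : ℂ) / (((k - n) + m + 1).factorial : ℂ))‖ :=
            rfl
        _ ≤ ∑' m : ℕ, ‖x (k + 1 + m) * ((-1 : ℂ) ^ (k - n)
              * (((k - n) + m).choose (k - n) : ℂ) / (((k - n) + m + 1).factorial : ℂ))‖ :=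
            norm_tsum_le_tsum_norm hnormsum
        _ ≤ ∑' m : ℕ, ((((k + l).factorial : ℝ) / ((k - n).factorial : ℝ) * q ^ k)
              * ((((m + 1) + (k + l)).choose (k + l) : ℝ) * q ^ (m + 1))) :=
            Summable.tsum_le_tsum hbnd hnormsum hushift
        _ ≤ ∑' m : ℕ, ((((k + l).factorial : ℝ) / ((k - n).factorial : ℝ) * q ^ k)
              * (((m + (k + l)).choose (k + l) : ℝ) * q ^ m)) := by
            rw [Summable.tsum_eq_zero_add hu.summable]
            have h0 : (0 : ℝ) ≤ (((k + l).factorial : ℝ) / ((k - n).factorial : ℝ) * q ^ k)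
                * (((0 + (k + l)).choose (k + l) : ℝ) * q ^ 0) := by positivity
            linarith
        _ = ((k + l).factorial : ℝ) / ((k - n).factorial : ℝ) *
              (1 / (1 - q) ^ (l + 1)) * (q / (1 - q)) ^ k := by
            rw [hu.tsum_eq, div_pow, show (k + l) + 1 = (l + 1) + k by omega, pow_add,
              one_div, one_div, mul_inv]
            ring
  refine ⟨fun n k hnk => (main n k hnk).1, fun n k hnk => (main n k hnk).2, ?_⟩
  intro hhalf n
  have hc1 : q / (1 - q) < 1 := by rw [div_lt_one h1q]; linarith
  have hc0 : 0 ≤ q / (1 - q) := by positivity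
  have hsum : Summable (fun k : ℕ => ((k : ℝ)) ^ (n + l) * (q / (1 - q)) ^ k) := by
    apply summable_pow_mul_geometric_of_norm_lt_one
    rw [Real.norm_eq_abs, abs_of_nonneg hc0]
    exact hc1
  have htend : Tendsto (fun k : ℕ =>
      ((((l : ℝ) + 1) ^ (n + l)) * (1 / (1 - q) ^ (l + 1)))
        * (((k : ℝ)) ^ (n + l) * (q / (1 - q)) ^ k)) atTop (nhds 0) := by
    simpa using (hsum.tendsto_atTop_zero).const_mul
      ((((l : ℝ) + 1) ^ (n + l)) * (1 / (1 - q) ^ (l + 1)))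
  apply squeeze_zero_norm' _ htend
  filter_upwards [eventually_ge_atTop n, eventually_ge_atTop 1] with k hkn hk1
  have hb := (main n k hkn).2
  refine hb.trans ?_
  have hfle : ((k + l).factorial : ℝ) / ((k - n).factorial : ℝ)
      ≤ ((l : ℝ) + 1) ^ (n + l) * ((k : ℝ)) ^ (n + l) := by
    rw [div_le_iff₀ (by exact_mod_cast (k - n).factorial_pos)]
    have h1 : (k + l).factorial ≤ (k - n).factorial * (k + l) ^ (n + l) := by
      have h := fact_le_aux (k - n) (n + l)
      rwa [show (k - n) + (n + l) = k + l by omega] at h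
    have hkl : k + l ≤ (l + 1) * k := by nlinarith
    have h2 : (k + l) ^ (n + l) ≤ ((l + 1) * k) ^ (n + l) := Nat.pow_le_pow_left hkl _
    calc ((k + l).factorial : ℝ)
        ≤ (((k - n).factorial * (k + l) ^ (n + l) : ℕ) : ℝ) := by exact_mod_cast h1
      _ ≤ (((k - n).factorial * ((l + 1) * k) ^ (n + l) : ℕ) : ℝ) := by
          exact_mod_cast Nat.mul_le_mul_left _ h2
      _ = ((l : ℝ) + 1) ^ (n + l) * ((k : ℝ)) ^ (n + l) * ((k - n).factorial : ℝ) := by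
          rw [mul_pow]
          push_cast
          ring
  calc ((k + l).factorial : ℝ) / ((k - n).factorial : ℝ) * (1 / (1 - q) ^ (l + 1))
        * (q / (1 - q)) ^ k
      ≤ (((l : ℝ) + 1) ^ (n + l) * ((k : ℝ)) ^ (n + l)) * (1 / (1 - q) ^ (l + 1))
        * (q / (1 - q)) ^ k := by
        apply mul_le_mul_of_nonneg_right _ (by positivity)
        apply mul_le_mul_of_nonneg_right hfle (by positivity)
    _ = ((((l : ℝ) + 1) ^ (n + l)) * (1 / (1 - q) ^ (l + 1)))
        * (((k : ℝ)) ^ (n + l) * (q / (1 - q)) ^ k) := by ring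
end
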